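/- arXiv:1409.5116 — 3 statements merged into one kernel-verified Lean document; each statement's English description precedes it below -/
import Mathlib

section
/- Let G be a 4-Ore graph not isomorphic to K4. Then for every triangle T of G, the set V(G)∖V(T) contains either a collapsible subset of G or a nontrivial cocollapsible subset of G. -/
open SimpleGraph

/-- The degree of a vertex, as the cardinality of its neighbor set. -/
noncomputable def deg {V : Type} (G : SimpleGraph V) (v : V) : ℕ :=
  Nat.card (G.neighborSet v)

/-- The number of edges of a graph. -/
noncomputable def numEdges {V : Type} (G : SimpleGraph V) : ℕ :=
  Nat.card G.edgeSet

/-- The independence number of a graph. -/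
noncomputable def indepNum {V : Type} (G : SimpleGraph V) : ℕ :=
  sSup {n | ∃ s : Set V, (∀ u ∈ s, ∀ v ∈ s, ¬ G.Adj u v) ∧ s.ncard = n}

/-- The set of vertices of degree at most three. -/
noncomputable def D3set {V : Type} (G : SimpleGraph V) : Set V :=
  {v | deg G v ≤ 3}

/-- `D3(G)`: the subgraph induced by the vertices of degree at most three. -/
noncomputable def D3 {V : Type} (G : SimpleGraph V) : SimpleGraph (D3set G) :=
  G.induce (D3set G)

/-- The potential of a graph: `p(G) = 4.8 |V(G)| - 3 |E(G)| + 0.6 α(D3(G))`. -/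
noncomputable def potential {V : Type} (G : SimpleGraph V) : ℚ :=
  (24/5 : ℚ) * Nat.card V - 3 * numEdges G + (3/5 : ℚ) * _root_.indepNum (D3 G)

/-- The potential of a subset `R` of the vertices of `G`:
`p(R) = 4.8 |R| - 3 |E(G[R])| + 0.6 α(G[D3(G) ∩ R])`. -/
noncomputable def potentialOf {V : Type} (G : SimpleGraph V) (R : Set V) : ℚ :=
  (24/5 : ℚ) * R.ncard - 3 * numEdges (G.induce R)
    + (3/5 : ℚ) * _root_.indepNum (G.induce (D3set G ∩ R))

/-- A graph is `k`-critical if it is not `(k-1)`-colorable but every proper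
subgraph is `(k-1)`-colorable. -/
def IsKCritical {V : Type} (G : SimpleGraph V) (k : ℕ) : Prop :=
  ¬ G.Colorable (k - 1) ∧ ∀ H : SimpleGraph V, H ≤ G → H ≠ G → H.Colorable (k - 1)

/-- A graph has Ore-degree at most `d` if `d(u) + d(v) ≤ d` for every edge `uv`. -/
def OreDegreeAtMost {V : Type} (G : SimpleGraph V) (d : ℕ) : Prop :=
  ∀ u v, G.Adj u v → deg G u + deg G v ≤ d

/-- The Ore-composition of `G1` (edge-side, with replaced edge `xy`) and `G2`
(split-side, with split vertex `z` whose incident edges going to `A` are attached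
to `x` and the remaining ones to `y`). -/
def oreCompose {V1 V2 : Type} (G1 : SimpleGraph V1) (G2 : SimpleGraph V2)
    (x y : V1) (z : V2) (A : Set V2) :
    SimpleGraph (V1 ⊕ {v : V2 // v ≠ z}) :=
  SimpleGraph.fromRel (fun a b =>
    match a, b with
    | Sum.inl u, Sum.inl v =>
        G1.Adj u v ∧ ¬((u = x ∧ v = y) ∨ (u = y ∧ v = x))
    | Sum.inl u, Sum.inr v =>
        (u = x ∧ G2.Adj z v.1 ∧ v.1 ∈ A) ∨ (u = y ∧ G2.Adj z v.1 ∧ v.1 ∉ A)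
    | Sum.inr _, Sum.inl _ => False
    | Sum.inr u, Sum.inr v => G2.Adj u.1 v.1)

/-- `G` is an Ore-composition of `G1` and `G2`: there are a replaced edge `xy` of
`G1`, a split vertex `z` of `G2`, and a splitting of the edges at `z` into two
nonempty parts, such that `G` is isomorphic to the resulting composition. -/
def IsOreComposition {V V1 V2 : Type} (G : SimpleGraph V)
    (G1 : SimpleGraph V1) (G2 : SimpleGraph V2) : Prop :=
  ∃ (x y : V1) (z : V2) (A : Set V2),
    G1.Adj x y ∧ (∃ p, G2.Adj z p ∧ p ∈ A) ∧ (∃ q, G2.Adj z q ∧ q ∉ A) ∧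
    Nonempty (G ≃g oreCompose G1 G2 x y z A)

/-- The family of `4`-Ore graphs: the smallest family of graphs containing `K4`
and closed under Ore-compositions. -/
inductive IsFourOre : ∀ {V : Type}, SimpleGraph V → Prop
  | k4 {V : Type} (G : SimpleGraph V) :
      Nonempty (G ≃g completeGraph (Fin 4)) → IsFourOre G
  | comp {V V1 V2 : Type} (G : SimpleGraph V)
      (G1 : SimpleGraph V1) (G2 : SimpleGraph V2) :
      IsFourOre G1 → IsFourOre G2 → IsOreComposition G G1 G2 → IsFourOre G

/-- The boundary of a set `R`: the vertices of `R` with a neighbor outside `R`. -/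
def boundary {V : Type} (G : SimpleGraph V) (R : Set V) : Set V :=
  {v | v ∈ R ∧ ∃ u, u ∉ R ∧ G.Adj v u}

/-- A proper subset `R` of the vertices with `|R| ≥ 2` is collapsible if in every
proper 3-coloring of `G[R]` all vertices of the boundary of `R` get the same color. -/
def Collapsible {V : Type} (G : SimpleGraph V) (R : Set V) : Prop :=
  R ≠ Set.univ ∧ 2 ≤ R.ncard ∧
  ∀ φ : V → Fin 3, (∀ u ∈ R, ∀ v ∈ R, G.Adj u v → φ u ≠ φ v) →
    ∀ u ∈ boundary G R, ∀ v ∈ boundary G R, φ u = φ v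

/-- The critical complement of a set `R`: identify the boundary of `R` to a single
vertex (the vertex `none`) and delete the rest of `R`. -/
def criticalComplement {V : Type} (G : SimpleGraph V) (R : Set V) :
    SimpleGraph (Option {v : V // v ∉ R}) :=
  SimpleGraph.fromRel (fun a b =>
    match a, b with
    | some u, some v => G.Adj u.1 v.1
    | some u, none => ∃ w ∈ boundary G R, G.Adj u.1 w
    | none, some _ => False
    | none, none => False)

/-- A nonempty proper subset `R` with boundary `S` is cocollapsible if every vertex
of `S` has exactly one neighbor outside `R`, and for every non-constant list of
forbidden colors on `S` there is a proper 3-coloring of `G[R]` avoiding them. -/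
def Cocollapsible {V : Type} (G : SimpleGraph V) (R : Set V) : Prop :=
  R.Nonempty ∧ R ≠ Set.univ ∧
  (∀ v ∈ boundary G R, ∃! u, u ∉ R ∧ G.Adj v u) ∧
  ∀ f : V → Fin 3,
    (∃ u ∈ boundary G R, ∃ v ∈ boundary G R, f u ≠ f v) →
    ∃ φ : V → Fin 3, (∀ u ∈ R, ∀ v ∈ R, G.Adj u v → φ u ≠ φ v) ∧
      ∀ v ∈ boundary G R, φ v ≠ f v

/-- A cocollapsible set is nontrivial if its complement has more than one vertex. -/
def NontrivialCocollapsible {V : Type} (G : SimpleGraph V) (R : Set V) : Prop :=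
  Cocollapsible G R ∧ 1 < (Rᶜ : Set V).ncard

/-- The graph `H` together with the (possibly new) edge `uv`. -/
def withEdge {W : Type} (H : SimpleGraph W) (u v : W) : SimpleGraph W :=
  H ⊔ SimpleGraph.fromEdgeSet {s(u, v)}

/-- A collapsible set `R` is tight if for any two distinct boundary vertices `u, v`
the graph `G[R] + uv` is `4`-critical. -/
def TightCollapsible {V : Type} (G : SimpleGraph V) (R : Set V) : Prop :=
  Collapsible G R ∧
  ∀ u (hu : u ∈ boundary G R) v (hv : v ∈ boundary G R), u ≠ v →
    IsKCritical (withEdge (G.induce R) ⟨u, hu.1⟩ ⟨v, hv.1⟩) 4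

/-- `s(H) = |E(H)| - |V(H)| + α(H)`. -/
noncomputable def sVal {V : Type} (H : SimpleGraph V) : ℤ :=
  (numEdges H : ℤ) - (Nat.card V : ℤ) + (_root_.indepNum H : ℤ)

/-- `H7`: the unique Ore-composition of two copies of `K4`. Vertices `0,1,2,3`
form the edge-side `K4` with replaced edge `01`; the split vertex of the second
`K4` on `{z,4,5,6}` is split so that `0` gets the edge to `4` and `1` gets the
edges to `5` and `6`. -/
def H7 : SimpleGraph (Fin 7) :=
  SimpleGraph.fromRel (fun a b =>
    ((a, b) : Fin 7 × Fin 7) ∈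
      ([(0, 2), (0, 3), (1, 2), (1, 3), (2, 3), (4, 5), (4, 6), (5, 6),
        (0, 4), (1, 5), (1, 6)] : List (Fin 7 × Fin 7)))

/-- A diamond in `G`: a subgraph isomorphic to `K4` minus an edge whose two
vertices of degree three within the subgraph (`w1` and `w2`) also have degree
three in `G`.  The vertices `e1` and `e2` are the ends of the diamond. -/
def IsDiamond {V : Type} (G : SimpleGraph V) (e1 e2 w1 w2 : V) : Prop :=
  e1 ≠ e2 ∧ e1 ≠ w1 ∧ e1 ≠ w2 ∧ e2 ≠ w1 ∧ e2 ≠ w2 ∧ w1 ≠ w2 ∧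
  G.Adj w1 w2 ∧ G.Adj e1 w1 ∧ G.Adj e1 w2 ∧ G.Adj e2 w1 ∧ G.Adj e2 w2 ∧
  deg G w1 = 3 ∧ deg G w2 = 3

/-- A triangle with a pendant edge. -/
def trianglePendant1 : SimpleGraph (Fin 4) :=
  SimpleGraph.fromRel (fun a b =>
    ((a, b) : Fin 4 × Fin 4) ∈ ([(0, 1), (1, 2), (2, 0), (0, 3)] : List (Fin 4 × Fin 4)))

/-- A triangle with a pendant path on two further vertices. -/
def trianglePendant2 : SimpleGraph (Fin 5) :=
  SimpleGraph.fromRel (fun a b =>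
    ((a, b) : Fin 5 × Fin 5) ∈
      ([(0, 1), (1, 2), (2, 0), (0, 3), (3, 4)] : List (Fin 5 × Fin 5)))
section OreAdj
open Sum
variable {V1 V2 : Type} (G1 : SimpleGraph V1) (G2 : SimpleGraph V2)
  (x y : V1) (z : V2) (A : Set V2)

lemma oreAdj_inl_inl {u v : V1} :
    (oreCompose G1 G2 x y z A).Adj (inl u) (inl v) ↔
      G1.Adj u v ∧ ¬((u = x ∧ v = y) ∨ (u = y ∧ v = x)) := by
  simp only [oreCompose, SimpleGraph.fromRel_adj, ne_eq, inl.injEq]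
  constructor
  · rintro ⟨hne, h | h⟩
    · exact h
    · exact ⟨h.1.symm, fun hc => h.2 (by tauto)⟩
  · intro h
    exact ⟨fun hc => G1.irrefl (hc ▸ h.1), Or.inl h⟩

lemma oreAdj_inl_inr {u : V1} {v : {v : V2 // v ≠ z}} :
    (oreCompose G1 G2 x y z A).Adj (inl u) (inr v) ↔
      (u = x ∧ G2.Adj z v.1 ∧ v.1 ∈ A) ∨ (u = y ∧ G2.Adj z v.1 ∧ v.1 ∉ A) := by
  simp only [oreCompose, SimpleGraph.fromRel_adj]
  constructor
  · rintro ⟨_, h | h⟩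
    · exact h
    · exact h.elim
  · intro h
    exact ⟨by simp, Or.inl h⟩

lemma oreAdj_inr_inl {u : V1} {v : {v : V2 // v ≠ z}} :
    (oreCompose G1 G2 x y z A).Adj (inr v) (inl u) ↔
      (u = x ∧ G2.Adj z v.1 ∧ v.1 ∈ A) ∨ (u = y ∧ G2.Adj z v.1 ∧ v.1 ∉ A) := by
  rw [SimpleGraph.adj_comm]; exact oreAdj_inl_inr G1 G2 x y z A

lemma oreAdj_inr_inr {u v : {v : V2 // v ≠ z}} :
    (oreCompose G1 G2 x y z A).Adj (inr u) (inr v) ↔ G2.Adj u.1 v.1 := by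
  simp only [oreCompose, SimpleGraph.fromRel_adj, ne_eq, inr.injEq]
  constructor
  · rintro ⟨_, h | h⟩
    · exact h
    · exact h.symm
  · intro h
    exact ⟨fun hc => G2.irrefl ((Subtype.ext_iff.mp hc) ▸ h), Or.inl h⟩

end OreAdj
/-! ### Core coloring properties of 4-Ore graphs -/

/-- `G` has no proper 3-coloring. -/
def NoK3Col {V : Type} (G : SimpleGraph V) : Prop :=
  ¬ ∃ φ : V → Fin 3, ∀ a b, G.Adj a b → φ a ≠ φ b

/-- Property C: for every edge `xy` and color `c` there is a coloring of `G - xy`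
giving both `x` and `y` color `c`. -/
def PropC {V : Type} (G : SimpleGraph V) : Prop :=
  ∀ x y, G.Adj x y → ∀ c : Fin 3, ∃ φ : V → Fin 3,
    (∀ a b, G.Adj a b → ¬((a = x ∧ b = y) ∨ (a = y ∧ b = x)) → φ a ≠ φ b) ∧
    φ x = c ∧ φ y = c

/-- Property L4: for every vertex `z` and forbidden-color function `f` that is
not constant on `N(z)`, there is a coloring of `G - z` avoiding `f` on `N(z)`. -/
def PropL4 {V : Type} (G : SimpleGraph V) : Prop :=
  ∀ z (f : V → Fin 3), (∃ u, G.Adj z u ∧ ∃ v, G.Adj z v ∧ f u ≠ f v) →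
    ∃ φ : V → Fin 3, (∀ a b, G.Adj a b → a ≠ z → b ≠ z → φ a ≠ φ b) ∧
      ∀ u, G.Adj z u → φ u ≠ f u

/-! #### Base case facts on `K4 = completeGraph (Fin 4)` -/

lemma k4_noK3Col_aux : ¬ ∃ φ : Fin 4 → Fin 3, ∀ a b : Fin 4, a ≠ b → φ a ≠ φ b := by
  decide

lemma k4_second_nbr_aux : ∀ a b : Fin 4, ∃ c : Fin 4, c ≠ a ∧ c ≠ b := by decide

lemma k4_propC_aux : ∀ (x y : Fin 4), x ≠ y → ∀ c : Fin 3, ∃ φ : Fin 4 → Fin 3,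
    (∀ a b : Fin 4, a ≠ b → ¬((a = x ∧ b = y) ∨ (a = y ∧ b = x)) → φ a ≠ φ b) ∧
    φ x = c ∧ φ y = c := by decide

set_option maxRecDepth 10000 in
lemma k4_propL4_aux : ∀ (z : Fin 4) (f : Fin 4 → Fin 3),
    (∃ u, z ≠ u ∧ ∃ v, z ≠ v ∧ f u ≠ f v) →
    ∃ φ : Fin 4 → Fin 3, (∀ a b : Fin 4, a ≠ b → a ≠ z → b ≠ z → φ a ≠ φ b) ∧
      ∀ u, z ≠ u → φ u ≠ f u := by decide
theorem fourOre_noK3Col {V : Type} {G : SimpleGraph V} (h : IsFourOre G) : NoK3Col G := by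
  classical
  induction h with
  | k4 G hiso =>
    obtain ⟨e⟩ := hiso
    rintro ⟨φ, hφ⟩
    exact k4_noK3Col_aux ⟨φ ∘ e.symm, fun a b hab =>
      hφ _ _ (e.symm.map_adj_iff.mpr (by simpa [completeGraph] using hab))⟩
  | comp G G1 G2 h1 h2 hcomp ih1 ih2 =>
    obtain ⟨x, y, z, A, hxy, ⟨p, hzp, hpA⟩, ⟨q, hzq, hqA⟩, ⟨e⟩⟩ := hcomp
    rintro ⟨φ0, hφ0⟩
    set H := oreCompose G1 G2 x y z A with hH
    have hφ : ∀ a b, H.Adj a b → φ0 (e.symm a) ≠ φ0 (e.symm b) := fun a b hab =>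
      hφ0 _ _ (e.symm.map_adj_iff.mpr hab)
    set φ : _ → Fin 3 := fun a => φ0 (e.symm a) with hφdef
    have hxyeq : φ (Sum.inl x) = φ (Sum.inl y) := by
      by_contra hne
      apply ih1
      refine ⟨fun a => φ (Sum.inl a), fun a b hab hc => ?_⟩
      by_cases hp' : (a = x ∧ b = y) ∨ (a = y ∧ b = x)
      · rcases hp' with ⟨ha, hb⟩ | ⟨ha, hb⟩ <;> rw [ha, hb] at hc
        · exact hne hc
        · exact hne hc.symm
      · exact hφ _ _ ((oreAdj_inl_inl G1 G2 x y z A).mpr ⟨hab, hp'⟩) hc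
    apply ih2
    refine ⟨fun v => if hv : v = z then φ (Sum.inl x) else φ (Sum.inr ⟨v, hv⟩), ?_⟩
    intro a b hab hc
    simp only at hc
    by_cases ha : a = z
    · have hab' : G2.Adj z b := ha ▸ hab
      have hb : b ≠ z := fun hb => G2.irrefl (hb ▸ hab')
      rw [dif_pos ha, dif_neg hb] at hc
      by_cases hbA : b ∈ A
      · exact hφ _ _ ((oreAdj_inl_inr G1 G2 x y z A).mpr (Or.inl ⟨rfl, hab', hbA⟩)) hc
      · exact hφ _ _ ((oreAdj_inl_inr G1 G2 x y z A).mpr (Or.inr ⟨rfl, hab', hbA⟩))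
          (hxyeq ▸ hc)
    · by_cases hb : b = z
      · have hab' : G2.Adj z a := hb ▸ hab.symm
        rw [dif_pos hb, dif_neg ha] at hc
        by_cases haA : a ∈ A
        · exact (hφ _ _ ((oreAdj_inl_inr G1 G2 x y z A).mpr
            (Or.inl ⟨rfl, hab', haA⟩)) hc.symm)
        · exact (hφ _ _ ((oreAdj_inl_inr G1 G2 x y z A).mpr
            (Or.inr ⟨rfl, hab', haA⟩)) (hxyeq ▸ hc.symm))
      · rw [dif_neg ha, dif_neg hb] at hc
        exact hφ _ _ ((oreAdj_inr_inr G1 G2 x y z A).mpr hab) hc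
theorem fourOre_second_nbr {V : Type} {G : SimpleGraph V} (h : IsFourOre G) :
    ∀ v w, G.Adj v w → ∃ u, G.Adj v u ∧ u ≠ w := by
  classical
  induction h with
  | k4 G hiso =>
    obtain ⟨e⟩ := hiso
    intro v w hvw
    obtain ⟨c, hc1, hc2⟩ := k4_second_nbr_aux (e v) (e w)
    refine ⟨e.symm c, ?_, ?_⟩
    · have h2 : G.Adj v (e.symm c) ↔ (completeGraph (Fin 4)).Adj (e v) (e (e.symm c)) :=
        (e.map_adj_iff).symm
      rw [h2, e.apply_symm_apply]
      simpa [completeGraph] using fun hcon => hc1 hcon.symm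
    · intro hcon
      exact hc2 (by rw [← hcon, e.apply_symm_apply])
  | comp G G1 G2 h1 h2 hcomp ih1 ih2 =>
    obtain ⟨x, y, z, A, hxy, ⟨p, hzp, hpA⟩, ⟨q, hzq, hqA⟩, ⟨e⟩⟩ := hcomp
    set H := oreCompose G1 G2 x y z A with hH
    have hxyne : x ≠ y := G1.ne_of_adj hxy
    have key : ∀ v w, H.Adj v w → ∃ u, H.Adj v u ∧ u ≠ w := by
      rintro (a | a) (b | b) hab
      · rw [oreAdj_inl_inl] at hab
        obtain ⟨u, hau, hub⟩ := ih1 a b hab.1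
        by_cases hp' : (a = x ∧ u = y) ∨ (a = y ∧ u = x)
        · rcases hp' with ⟨ha, hu⟩ | ⟨ha, hu⟩
          · refine ⟨Sum.inr ⟨p, G2.ne_of_adj hzp.symm⟩,
              (oreAdj_inl_inr G1 G2 x y z A).mpr (Or.inl ⟨ha, hzp, hpA⟩), by simp⟩
          · refine ⟨Sum.inr ⟨q, G2.ne_of_adj hzq.symm⟩,
              (oreAdj_inl_inr G1 G2 x y z A).mpr (Or.inr ⟨ha, hzq, hqA⟩), by simp⟩
        · exact ⟨Sum.inl u, (oreAdj_inl_inl G1 G2 x y z A).mpr ⟨hau, hp'⟩,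
            fun hc => hub (Sum.inl_injective hc)⟩
      · rw [oreAdj_inl_inr] at hab
        rcases hab with ⟨ha, -, -⟩ | ⟨ha, -, -⟩
        · obtain ⟨u, hau, huy⟩ := ih1 x y hxy
          refine ⟨Sum.inl u, (oreAdj_inl_inl G1 G2 x y z A).mpr ⟨ha ▸ hau, ?_⟩, by simp⟩
          rintro (⟨-, rfl⟩ | ⟨hax, -⟩)
          · exact huy rfl
          · exact hxyne (ha.symm.trans hax)
        · obtain ⟨u, hau, hux⟩ := ih1 y x hxy.symm
          refine ⟨Sum.inl u, (oreAdj_inl_inl G1 G2 x y z A).mpr ⟨ha ▸ hau, ?_⟩, by simp⟩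
          rintro (⟨hay, -⟩ | ⟨-, rfl⟩)
          · exact hxyne (hay.symm.trans ha)
          · exact hux rfl
      · rw [oreAdj_inr_inl] at hab
        have hza : G2.Adj a.1 z := by
          rcases hab with ⟨-, hz, -⟩ | ⟨-, hz, -⟩ <;> exact hz.symm
        obtain ⟨u, hau, huz⟩ := ih2 a.1 z hza
        exact ⟨Sum.inr ⟨u, huz⟩, (oreAdj_inr_inr G1 G2 x y z A).mpr hau, by simp⟩
      · rw [oreAdj_inr_inr] at hab
        obtain ⟨u, hau, hub⟩ := ih2 a.1 b.1 hab
        by_cases huz : u = z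
        · by_cases haA : a.1 ∈ A
          · exact ⟨Sum.inl x, (oreAdj_inr_inl G1 G2 x y z A).mpr
              (Or.inl ⟨rfl, (huz ▸ hau).symm, haA⟩), by simp⟩
          · exact ⟨Sum.inl y, (oreAdj_inr_inl G1 G2 x y z A).mpr
              (Or.inr ⟨rfl, (huz ▸ hau).symm, haA⟩), by simp⟩
        · refine ⟨Sum.inr ⟨u, huz⟩, (oreAdj_inr_inr G1 G2 x y z A).mpr hau, ?_⟩
          intro hc
          exact hub (Subtype.ext_iff.mp (Sum.inr_injective hc))
    intro v w hvw
    obtain ⟨u, hu1, hu2⟩ := key (e v) (e w) (e.map_adj_iff.mpr hvw)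
    refine ⟨e.symm u, ?_, fun hc => hu2 (by rw [← hc, e.apply_symm_apply])⟩
    have h3 := e.map_adj_iff (v := v) (w := e.symm u)
    rw [e.apply_symm_apply] at h3
    exact h3.mp hu1
lemma PropC_of_iso {V W : Type} {G : SimpleGraph V} {H : SimpleGraph W}
    (e : G ≃g H) (h : PropC H) : PropC G := by
  intro x y hxy c
  obtain ⟨ψ, hψ, hx, hy⟩ := h (e x) (e y) (e.map_adj_iff.mpr hxy) c
  refine ⟨fun a => ψ (e a), fun a b hab hne => hψ _ _ (e.map_adj_iff.mpr hab) ?_, hx, hy⟩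
  rintro (⟨h1, h2⟩ | ⟨h1, h2⟩)
  · exact hne (Or.inl ⟨e.injective h1, e.injective h2⟩)
  · exact hne (Or.inr ⟨e.injective h1, e.injective h2⟩)

lemma PropL4_of_iso {V W : Type} {G : SimpleGraph V} {H : SimpleGraph W}
    (e : G ≃g H) (h : PropL4 H) : PropL4 G := by
  intro z f ⟨u, hu, v, hv, hf⟩
  obtain ⟨ψ, hψ, havoid⟩ := h (e z) (fun a => f (e.symm a))
    ⟨e u, e.map_adj_iff.mpr hu, e v, e.map_adj_iff.mpr hv, by
      simpa [e.symm_apply_apply] using hf⟩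
  refine ⟨fun a => ψ (e a), fun a b hab ha hb => hψ _ _ (e.map_adj_iff.mpr hab)
    (fun hc => ha (e.injective hc)) (fun hc => hb (e.injective hc)), fun u hu => ?_⟩
  have := havoid (e u) (e.map_adj_iff.mpr hu)
  simpa [e.symm_apply_apply] using this

lemma propC_K4 : PropC (completeGraph (Fin 4)) := by
  intro x y hxy c
  obtain ⟨φ, hφ, hx, hy⟩ := k4_propC_aux x y hxy c
  exact ⟨φ, fun a b hab => hφ a b hab, hx, hy⟩

lemma propL4_K4 : PropL4 (completeGraph (Fin 4)) := by
  intro z f ⟨u, hu, v, hv, hf⟩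
  obtain ⟨φ, hφ, hav⟩ := k4_propL4_aux z f ⟨u, hu, v, hv, hf⟩
  exact ⟨φ, fun a b hab => hφ a b hab, hav⟩
lemma fin3_ne_add_one : ∀ c : Fin 3, c ≠ c + 1 := by decide

theorem fourOre_propC_propL4 {V : Type} {G : SimpleGraph V} (h : IsFourOre G) :
    PropC G ∧ PropL4 G := by
  classical
  induction h with
  | k4 G hiso =>
    obtain ⟨e⟩ := hiso
    exact ⟨PropC_of_iso e propC_K4, PropL4_of_iso e propL4_K4⟩
  | comp G G1 G2 h1 h2 hcomp ih1 ih2 =>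
    obtain ⟨x, y, z, A, hxy, ⟨p, hzp, hpA⟩, ⟨q, hzq, hqA⟩, ⟨e⟩⟩ := hcomp
    obtain ⟨ihC1, ihL1⟩ := ih1
    obtain ⟨ihC2, ihL2⟩ := ih2
    set H := oreCompose G1 G2 x y z A with hH
    have hxyne : x ≠ y := G1.ne_of_adj hxy
    -- cross-edge case of Property C
    have hCcross : ∀ u (w : {v : _ // v ≠ z}), H.Adj (Sum.inl u) (Sum.inr w) → ∀ c : Fin 3,
        ∃ φ : _ → Fin 3,
          (∀ a b, H.Adj a b →
            ¬((a = Sum.inl u ∧ b = Sum.inr w) ∨ (a = Sum.inr w ∧ b = Sum.inl u)) →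
            φ a ≠ φ b) ∧ φ (Sum.inl u) = c ∧ φ (Sum.inr w) = c := by
      intro u w huw c
      rw [oreAdj_inl_inr] at huw
      obtain ⟨φ1, hφ1, hφ1x, hφ1y⟩ := ihC1 x y hxy c
      have hzw : G2.Adj z w.1 := by rcases huw with ⟨-, h', -⟩ | ⟨-, h', -⟩ <;> exact h'
      obtain ⟨φ2, hφ2, hφ2z, hφ2w⟩ := ihC2 z w.1 hzw c
      have crossNe : ∀ a (b : {v : _ // v ≠ z}), H.Adj (Sum.inl a) (Sum.inr b) →
          ¬(a = u ∧ b = w) → φ1 a ≠ φ2 b.1 := by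
        intro a b hadj hexc
        rw [oreAdj_inl_inr] at hadj
        have hzb : G2.Adj z b.1 := by rcases hadj with ⟨-, h', -⟩ | ⟨-, h', -⟩ <;> exact h'
        have hbww : φ2 b.1 ≠ c := by
          have hbne : b.1 ≠ w.1 := by
            intro hbw'
            rcases hadj with ⟨ha, -, hA⟩ | ⟨ha, -, hA⟩ <;>
              rcases huw with ⟨hu', -, hA'⟩ | ⟨hu', -, hA'⟩
            · exact hexc ⟨ha.trans hu'.symm, Subtype.ext hbw'⟩
            · exact hA' (hbw' ▸ hA)
            · exact hA (hbw' ▸ hA')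
            · exact hexc ⟨ha.trans hu'.symm, Subtype.ext hbw'⟩
          intro hc
          refine hφ2 z b.1 hzb ?_ (hφ2z.trans hc.symm)
          rintro (⟨-, h'⟩ | ⟨h', -⟩)
          · exact hbne h'
          · exact w.2 h'.symm
        have hφ1a : φ1 a = c := by
          rcases hadj with ⟨ha, -, -⟩ | ⟨ha, -, -⟩
          · rw [ha]; exact hφ1x
          · rw [ha]; exact hφ1y
        rw [hφ1a]
        exact fun hc => hbww hc.symm
      refine ⟨Sum.elim φ1 (fun a => φ2 a.1), ?_, ?_, hφ2w⟩
      · rintro (a | a) (b | b) hadj hexc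
        · rw [oreAdj_inl_inl] at hadj
          exact hφ1 a b hadj.1 hadj.2
        · exact crossNe a b hadj
            (fun hc => hexc (Or.inl ⟨congrArg Sum.inl hc.1, congrArg Sum.inr hc.2⟩))
        · intro hc
          exact crossNe b a hadj.symm
            (fun hc' => hexc (Or.inr ⟨congrArg Sum.inr hc'.2, congrArg Sum.inl hc'.1⟩))
            hc.symm
        · rw [oreAdj_inr_inr] at hadj
          refine hφ2 a.1 b.1 hadj ?_
          rintro (⟨h', -⟩ | ⟨-, h'⟩)
          · exact a.2 h'
          · exact b.2 h'
      · rcases huw with ⟨ha, -, -⟩ | ⟨ha, -, -⟩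
        · rw [ha]; exact hφ1x
        · rw [ha]; exact hφ1y
    have hC : PropC H := by
      rintro (u | u) (v | v) huv c
      · -- edge inside G1
        rw [oreAdj_inl_inl] at huv
        obtain ⟨huv1, hnp⟩ := huv
        obtain ⟨φ1, hφ1, hu, hv⟩ := ihC1 u v huv1 c
        have hxyne1 : φ1 x ≠ φ1 y := by
          refine hφ1 x y hxy ?_
          rintro (⟨h1', h2'⟩ | ⟨h1', h2'⟩)
          · exact hnp (Or.inl ⟨h1'.symm, h2'.symm⟩)
          · exact hnp (Or.inr ⟨h2'.symm, h1'.symm⟩)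
        obtain ⟨φ2, hφ2, hav2⟩ := ihL2 z (fun w => if w ∈ A then φ1 x else φ1 y)
          ⟨p, hzp, q, hzq, by simpa [hpA, hqA] using hxyne1⟩
        refine ⟨Sum.elim φ1 (fun a => φ2 a.1), ?_, hu, hv⟩
        rintro (a | a) (b | b) hadj hexc
        · rw [oreAdj_inl_inl] at hadj
          refine hφ1 a b hadj.1 ?_
          simp only [Sum.inl.injEq] at hexc
          exact hexc
        · rw [oreAdj_inl_inr] at hadj
          simp only [Sum.elim_inl, Sum.elim_inr]
          rcases hadj with ⟨ha, hzb, hA⟩ | ⟨ha, hzb, hA⟩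
          · intro hc; exact hav2 b.1 hzb (by rw [if_pos hA, ← ha]; exact hc.symm)
          · intro hc; exact hav2 b.1 hzb (by rw [if_neg hA, ← ha]; exact hc.symm)
        · rw [oreAdj_inr_inl] at hadj
          simp only [Sum.elim_inl, Sum.elim_inr]
          rcases hadj with ⟨hb, hza, hA⟩ | ⟨hb, hza, hA⟩
          · intro hc; exact hav2 a.1 hza (by rw [if_pos hA, ← hb]; exact hc)
          · intro hc; exact hav2 a.1 hza (by rw [if_neg hA, ← hb]; exact hc)
        · rw [oreAdj_inr_inr] at hadj
          exact hφ2 a.1 b.1 hadj a.2 b.2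
      · exact hCcross u v huv c
      · obtain ⟨φ, hφ, hc1, hc2⟩ := hCcross v u huv.symm c
        refine ⟨φ, fun a b hab hexc => hφ a b hab ?_, hc2, hc1⟩
        rintro (⟨h1', h2'⟩ | ⟨h1', h2'⟩)
        · exact hexc (Or.inr ⟨h1', h2'⟩)
        · exact hexc (Or.inl ⟨h1', h2'⟩)
      · -- edge inside G2
        rw [oreAdj_inr_inr] at huv
        obtain ⟨φ2, hφ2, hu2, hv2⟩ := ihC2 u.1 v.1 huv c
        obtain ⟨φ1, hφ1, hx1, hy1⟩ := ihC1 x y hxy (φ2 z)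
        have hzcross : ∀ (b : {v' : _ // v' ≠ z}), G2.Adj z b.1 → φ2 z ≠ φ2 b.1 := by
          intro b hzb
          refine hφ2 z b.1 hzb ?_
          rintro (⟨h', -⟩ | ⟨h', -⟩)
          · exact u.2 h'.symm
          · exact v.2 h'.symm
        refine ⟨Sum.elim φ1 (fun a => φ2 a.1), ?_, hu2, hv2⟩
        rintro (a | a) (b | b) hadj hexc
        · rw [oreAdj_inl_inl] at hadj
          exact hφ1 a b hadj.1 hadj.2
        · rw [oreAdj_inl_inr] at hadj
          simp only [Sum.elim_inl, Sum.elim_inr]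
          rcases hadj with ⟨ha, hzb, -⟩ | ⟨ha, hzb, -⟩
          · rw [ha, hx1]; exact hzcross b hzb
          · rw [ha, hy1]; exact hzcross b hzb
        · rw [oreAdj_inr_inl] at hadj
          simp only [Sum.elim_inl, Sum.elim_inr]
          rcases hadj with ⟨hb, hza, -⟩ | ⟨hb, hza, -⟩
          · rw [hb, hx1]; exact fun hc => hzcross a hza hc.symm
          · rw [hb, hy1]; exact fun hc => hzcross a hza hc.symm
        · rw [oreAdj_inr_inr] at hadj
          refine hφ2 a.1 b.1 hadj ?_
          rintro (⟨h1', h2'⟩ | ⟨h1', h2'⟩)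
          · exact hexc (Or.inl ⟨congrArg Sum.inr (Subtype.ext h1'),
              congrArg Sum.inr (Subtype.ext h2')⟩)
          · exact hexc (Or.inr ⟨congrArg Sum.inr (Subtype.ext h1'),
              congrArg Sum.inr (Subtype.ext h2')⟩)
    have hL4 : PropL4 H := by
      rintro (w | v) f hf
      · -- deleted vertex on the edge side
        by_cases hwx : w = x
        · subst hwx
          set fA : _ → Fin 3 := fun b => if hb : b = z then 0 else f (Sum.inr ⟨b, hb⟩)
            with hfA
          have hfAne : ∀ b : {v : _ // v ≠ z}, fA b.1 = f (Sum.inr b) := fun b => by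
            rw [hfA]; exact dif_neg b.2
          have tail : ∀ f1 : _ → Fin 3, (∀ a, a ≠ y → f1 a = f (Sum.inl a)) →
              (∃ a, G1.Adj w a ∧ ∃ b, G1.Adj w b ∧ f1 a ≠ f1 b) →
              (f1 y = fA p ∨ ∃ b1, G2.Adj z b1 ∧ b1 ∈ A ∧ fA b1 ≠ fA p) →
              ∃ φ : _ → Fin 3,
                (∀ a b, H.Adj a b → a ≠ Sum.inl w → b ≠ Sum.inl w → φ a ≠ φ b) ∧
                ∀ u', H.Adj (Sum.inl w) u' → φ u' ≠ f u' := by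
            intro f1 hf1eq hf1nc hsplit
            obtain ⟨φ1, hφ1, hav1⟩ := ihL1 w f1 hf1nc
            have hy1 : φ1 y ≠ f1 y := hav1 y hxy
            have hnc2 : ∃ u', G2.Adj z u' ∧ ∃ v', G2.Adj z v' ∧
                (if u' ∈ A then fA u' else φ1 y) ≠ (if v' ∈ A then fA v' else φ1 y) := by
              rcases hsplit with h' | ⟨b1, hzb1, hb1A, hne1⟩
              · refine ⟨p, hzp, q, hzq, ?_⟩
                rw [if_pos hpA, if_neg hqA, ← h']
                exact fun hcc => hy1 hcc.symm
              · refine ⟨b1, hzb1, p, hzp, ?_⟩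
                rw [if_pos hb1A, if_pos hpA]
                exact hne1
            obtain ⟨φ2, hφ2, hav2⟩ := ihL2 z _ hnc2
            refine ⟨Sum.elim φ1 (fun a => φ2 a.1), ?_, ?_⟩
            · rintro (a | a) (b | b) hadj ha hb
              · rw [oreAdj_inl_inl] at hadj
                exact hφ1 a b hadj.1 (fun h' => ha (congrArg Sum.inl h'))
                  (fun h' => hb (congrArg Sum.inl h'))
              · rw [oreAdj_inl_inr] at hadj
                simp only [Sum.elim_inl, Sum.elim_inr]
                rcases hadj with ⟨hax, -, -⟩ | ⟨hay, hzb, hA⟩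
                · exact absurd (congrArg Sum.inl hax) ha
                · rw [hay]; intro hc
                  exact hav2 b.1 hzb (by rw [if_neg hA]; exact hc.symm)
              · rw [oreAdj_inr_inl] at hadj
                simp only [Sum.elim_inl, Sum.elim_inr]
                rcases hadj with ⟨hbx, -, -⟩ | ⟨hby, hza, hA⟩
                · exact absurd (congrArg Sum.inl hbx) hb
                · rw [hby]; intro hc
                  exact hav2 a.1 hza (by rw [if_neg hA]; exact hc)
              · rw [oreAdj_inr_inr] at hadj
                exact hφ2 a.1 b.1 hadj a.2 b.2
            · rintro (a | a) hadj
              · rw [oreAdj_inl_inl] at hadj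
                obtain ⟨hxa, hnp⟩ := hadj
                have hay : a ≠ y := fun h' => hnp (Or.inl ⟨rfl, h'⟩)
                have h'' := hav1 a hxa
                simp only [Sum.elim_inl]
                rwa [hf1eq a hay] at h''
              · rw [oreAdj_inl_inr] at hadj
                rcases hadj with ⟨-, hzb, hA⟩ | ⟨hxeqy, -, -⟩
                · have h'' := hav2 a.1 hzb
                  rw [if_pos hA, hfAne a] at h''
                  exact h''
                · exact absurd hxeqy hxyne
          by_cases hcA : ∀ b, G2.Adj z b → b ∈ A → fA b = fA p
          · obtain ⟨u0, hu0, v0, hv0, hf0⟩ := hf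
            have nbr_val : ∀ s, H.Adj (Sum.inl w) s →
                (∃ a, s = Sum.inl a ∧ G1.Adj w a ∧ a ≠ y) ∨ f s = fA p := by
              rintro (a | a) hs
              · rw [oreAdj_inl_inl] at hs
                exact Or.inl ⟨a, rfl, hs.1, fun h' => hs.2 (Or.inl ⟨rfl, h'⟩)⟩
              · rw [oreAdj_inl_inr] at hs
                rcases hs with ⟨-, hza, hA⟩ | ⟨hxeqy, -, -⟩
                · refine Or.inr ?_
                  rw [← hcA a.1 hza hA]
                  exact (hfAne a).symm
                · exact absurd hxeqy hxyne
            have hex : ∃ a, G1.Adj w a ∧ a ≠ y ∧ f (Sum.inl a) ≠ fA p := by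
              rcases nbr_val u0 hu0 with ⟨a0, rfl, ha0, hay0⟩ | hv0'
              · rcases nbr_val v0 hv0 with ⟨b0, rfl, hb0, hby0⟩ | hv1'
                · by_cases h0 : f (Sum.inl a0) = fA p
                  · exact ⟨b0, hb0, hby0, fun h' => hf0 (h0.trans h'.symm)⟩
                  · exact ⟨a0, ha0, hay0, h0⟩
                · exact ⟨a0, ha0, hay0, fun h' => hf0 (h'.trans hv1'.symm)⟩
              · rcases nbr_val v0 hv0 with ⟨b0, rfl, hb0, hby0⟩ | hv1'
                · exact ⟨b0, hb0, hby0, fun h' => hf0 (hv0'.trans h'.symm)⟩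
                · exact absurd (hv0'.trans hv1'.symm) hf0
            obtain ⟨a1, ha1, ha1y, hfa1⟩ := hex
            refine tail (fun a => if a = y then fA p else f (Sum.inl a))
              (fun a ha' => if_neg ha') ⟨a1, ha1, y, hxy, ?_⟩ (Or.inl (if_pos rfl))
            simpa [ha1y] using hfa1
          · push_neg at hcA
            obtain ⟨b1, hzb1, hb1A, hne1⟩ := hcA
            obtain ⟨u1, hxu1, hu1y⟩ := fourOre_second_nbr h1 w y hxy
            refine tail (fun a => if a = y then f (Sum.inl u1) + 1 else f (Sum.inl a))
              (fun a ha' => if_neg ha') ⟨u1, hxu1, y, hxy, ?_⟩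
              (Or.inr ⟨b1, hzb1, hb1A, hne1⟩)
            simpa [hu1y] using fin3_ne_add_one (f (Sum.inl u1))
        · by_cases hwy : w = y
          · subst hwy
            set fA : _ → Fin 3 := fun b => if hb : b = z then 0 else f (Sum.inr ⟨b, hb⟩)
              with hfA
            have hfAne : ∀ b : {v : _ // v ≠ z}, fA b.1 = f (Sum.inr b) := fun b => by
              rw [hfA]; exact dif_neg b.2
            have tail : ∀ f1 : _ → Fin 3, (∀ a, a ≠ x → f1 a = f (Sum.inl a)) →
                (∃ a, G1.Adj w a ∧ ∃ b, G1.Adj w b ∧ f1 a ≠ f1 b) →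
                (f1 x = fA q ∨ ∃ b1, G2.Adj z b1 ∧ b1 ∉ A ∧ fA b1 ≠ fA q) →
                ∃ φ : _ → Fin 3,
                  (∀ a b, H.Adj a b → a ≠ Sum.inl w → b ≠ Sum.inl w → φ a ≠ φ b) ∧
                  ∀ u', H.Adj (Sum.inl w) u' → φ u' ≠ f u' := by
              intro f1 hf1eq hf1nc hsplit
              obtain ⟨φ1, hφ1, hav1⟩ := ihL1 w f1 hf1nc
              have hy1 : φ1 x ≠ f1 x := hav1 x hxy.symm
              have hnc2 : ∃ u', G2.Adj z u' ∧ ∃ v', G2.Adj z v' ∧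
                  (if u' ∈ A then φ1 x else fA u') ≠ (if v' ∈ A then φ1 x else fA v') := by
                rcases hsplit with h' | ⟨b1, hzb1, hb1A, hne1⟩
                · refine ⟨q, hzq, p, hzp, ?_⟩
                  rw [if_neg hqA, if_pos hpA, ← h']
                  exact fun hcc => hy1 hcc.symm
                · refine ⟨b1, hzb1, q, hzq, ?_⟩
                  rw [if_neg hb1A, if_neg hqA]
                  exact hne1
              obtain ⟨φ2, hφ2, hav2⟩ := ihL2 z _ hnc2
              refine ⟨Sum.elim φ1 (fun a => φ2 a.1), ?_, ?_⟩
              · rintro (a | a) (b | b) hadj ha hb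
                · rw [oreAdj_inl_inl] at hadj
                  exact hφ1 a b hadj.1 (fun h' => ha (congrArg Sum.inl h'))
                    (fun h' => hb (congrArg Sum.inl h'))
                · rw [oreAdj_inl_inr] at hadj
                  simp only [Sum.elim_inl, Sum.elim_inr]
                  rcases hadj with ⟨hax, hzb, hA⟩ | ⟨hay, -, -⟩
                  · rw [hax]; intro hc
                    exact hav2 b.1 hzb (by rw [if_pos hA]; exact hc.symm)
                  · exact absurd (congrArg Sum.inl hay) ha
                · rw [oreAdj_inr_inl] at hadj
                  simp only [Sum.elim_inl, Sum.elim_inr]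
                  rcases hadj with ⟨hbx, hza, hA⟩ | ⟨hby, -, -⟩
                  · rw [hbx]; intro hc
                    exact hav2 a.1 hza (by rw [if_pos hA]; exact hc)
                  · exact absurd (congrArg Sum.inl hby) hb
                · rw [oreAdj_inr_inr] at hadj
                  exact hφ2 a.1 b.1 hadj a.2 b.2
              · rintro (a | a) hadj
                · rw [oreAdj_inl_inl] at hadj
                  obtain ⟨hxa, hnp⟩ := hadj
                  have hay : a ≠ x := fun h' => hnp (Or.inr ⟨rfl, h'⟩)
                  have h'' := hav1 a hxa
                  simp only [Sum.elim_inl]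
                  rwa [hf1eq a hay] at h''
                · rw [oreAdj_inl_inr] at hadj
                  rcases hadj with ⟨hyeqx, -, -⟩ | ⟨-, hzb, hA⟩
                  · exact absurd hyeqx.symm hxyne
                  · have h'' := hav2 a.1 hzb
                    rw [if_neg hA, hfAne a] at h''
                    exact h''
            by_cases hcA : ∀ b, G2.Adj z b → b ∉ A → fA b = fA q
            · obtain ⟨u0, hu0, v0, hv0, hf0⟩ := hf
              have nbr_val : ∀ s, H.Adj (Sum.inl w) s →
                  (∃ a, s = Sum.inl a ∧ G1.Adj w a ∧ a ≠ x) ∨ f s = fA q := by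
                rintro (a | a) hs
                · rw [oreAdj_inl_inl] at hs
                  exact Or.inl ⟨a, rfl, hs.1, fun h' => hs.2 (Or.inr ⟨rfl, h'⟩)⟩
                · rw [oreAdj_inl_inr] at hs
                  rcases hs with ⟨hyeqx, -, -⟩ | ⟨-, hza, hA⟩
                  · exact absurd hyeqx.symm hxyne
                  · refine Or.inr ?_
                    rw [← hcA a.1 hza hA]
                    exact (hfAne a).symm
              have hex : ∃ a, G1.Adj w a ∧ a ≠ x ∧ f (Sum.inl a) ≠ fA q := by
                rcases nbr_val u0 hu0 with ⟨a0, rfl, ha0, hay0⟩ | hv0'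
                · rcases nbr_val v0 hv0 with ⟨b0, rfl, hb0, hby0⟩ | hv1'
                  · by_cases h0 : f (Sum.inl a0) = fA q
                    · exact ⟨b0, hb0, hby0, fun h' => hf0 (h0.trans h'.symm)⟩
                    · exact ⟨a0, ha0, hay0, h0⟩
                  · exact ⟨a0, ha0, hay0, fun h' => hf0 (h'.trans hv1'.symm)⟩
                · rcases nbr_val v0 hv0 with ⟨b0, rfl, hb0, hby0⟩ | hv1'
                  · exact ⟨b0, hb0, hby0, fun h' => hf0 (hv0'.trans h'.symm)⟩
                  · exact absurd (hv0'.trans hv1'.symm) hf0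
              obtain ⟨a1, ha1, ha1y, hfa1⟩ := hex
              refine tail (fun a => if a = x then fA q else f (Sum.inl a))
                (fun a ha' => if_neg ha') ⟨a1, ha1, x, hxy.symm, ?_⟩ (Or.inl (if_pos rfl))
              simpa [ha1y] using hfa1
            · push_neg at hcA
              obtain ⟨b1, hzb1, hb1A, hne1⟩ := hcA
              obtain ⟨u1, hxu1, hu1y⟩ := fourOre_second_nbr h1 w x hxy.symm
              refine tail (fun a => if a = x then f (Sum.inl u1) + 1 else f (Sum.inl a))
                (fun a ha' => if_neg ha') ⟨u1, hxu1, x, hxy.symm, ?_⟩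
                (Or.inr ⟨b1, hzb1, hb1A, hne1⟩)
              simpa [hu1y] using fin3_ne_add_one (f (Sum.inl u1))
          · -- generic interior vertex of G1
            have getInl : ∀ s, H.Adj (Sum.inl w) s → ∃ a, s = Sum.inl a ∧ G1.Adj w a := by
              rintro (a | a) hs
              · rw [oreAdj_inl_inl] at hs
                exact ⟨a, rfl, hs.1⟩
              · rw [oreAdj_inl_inr] at hs
                rcases hs with ⟨h', -, -⟩ | ⟨h', -, -⟩
                · exact absurd h' hwx
                · exact absurd h' hwy
            obtain ⟨u0, hu0, v0, hv0, hf0⟩ := hf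
            obtain ⟨a0, rfl, ha0⟩ := getInl u0 hu0
            obtain ⟨b0, rfl, hb0⟩ := getInl v0 hv0
            obtain ⟨φ1, hφ1, hav1⟩ := ihL1 w (fun a => f (Sum.inl a)) ⟨a0, ha0, b0, hb0, hf0⟩
            have hφ1xy : φ1 x ≠ φ1 y :=
              hφ1 x y hxy (fun h' => hwx h'.symm) (fun h' => hwy h'.symm)
            obtain ⟨φ2, hφ2, hav2⟩ := ihL2 z (fun b => if b ∈ A then φ1 x else φ1 y)
              ⟨p, hzp, q, hzq, by simpa [hpA, hqA] using hφ1xy⟩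
            refine ⟨Sum.elim φ1 (fun a => φ2 a.1), ?_, ?_⟩
            · rintro (a | a) (b | b) hadj ha hb
              · rw [oreAdj_inl_inl] at hadj
                exact hφ1 a b hadj.1 (fun h' => ha (congrArg Sum.inl h'))
                  (fun h' => hb (congrArg Sum.inl h'))
              · rw [oreAdj_inl_inr] at hadj
                simp only [Sum.elim_inl, Sum.elim_inr]
                rcases hadj with ⟨hax, hzb, hA⟩ | ⟨hay, hzb, hA⟩
                · rw [hax]; intro hc
                  exact hav2 b.1 hzb (by rw [if_pos hA]; exact hc.symm)
                · rw [hay]; intro hc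
                  exact hav2 b.1 hzb (by rw [if_neg hA]; exact hc.symm)
              · rw [oreAdj_inr_inl] at hadj
                simp only [Sum.elim_inl, Sum.elim_inr]
                rcases hadj with ⟨hbx, hza, hA⟩ | ⟨hby, hza, hA⟩
                · rw [hbx]; intro hc
                  exact hav2 a.1 hza (by rw [if_pos hA]; exact hc)
                · rw [hby]; intro hc
                  exact hav2 a.1 hza (by rw [if_neg hA]; exact hc)
              · rw [oreAdj_inr_inr] at hadj
                exact hφ2 a.1 b.1 hadj a.2 b.2
            · intro s hs
              obtain ⟨a, rfl, ha⟩ := getInl s hs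
              exact hav1 a ha
      · -- deleted vertex on the split side
        set f2 : _ → Fin 3 := fun b => if hb : b = z then
            (if v.1 ∈ A then f (Sum.inl x) else f (Sum.inl y)) else f (Sum.inr ⟨b, hb⟩)
          with hf2
        have hf2z : f2 z = (if v.1 ∈ A then f (Sum.inl x) else f (Sum.inl y)) := by
          rw [hf2]; exact dif_pos rfl
        have hf2ne : ∀ b : {v' : _ // v' ≠ z}, f2 b.1 = f (Sum.inr b) := fun b => by
          rw [hf2]; exact dif_neg b.2
        have toV2 : ∀ s, H.Adj (Sum.inr v) s → ∃ b2, G2.Adj v.1 b2 ∧ f2 b2 = f s := by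
          rintro (a | a) hs
          · rw [oreAdj_inr_inl] at hs
            rcases hs with ⟨hax, hzv, hA⟩ | ⟨hay, hzv, hA⟩
            · exact ⟨z, hzv.symm, by rw [hf2z, if_pos hA, hax]⟩
            · exact ⟨z, hzv.symm, by rw [hf2z, if_neg hA, hay]⟩
          · rw [oreAdj_inr_inr] at hs
            exact ⟨a.1, hs, hf2ne a⟩
        obtain ⟨u0, hu0, v0, hv0, hf0⟩ := hf
        obtain ⟨b2u, hb2u, hequ⟩ := toV2 u0 hu0
        obtain ⟨b2v, hb2v, heqv⟩ := toV2 v0 hv0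
        obtain ⟨φ2, hφ2, hav2⟩ := ihL2 v.1 f2
          ⟨b2u, hb2u, b2v, hb2v, by rw [hequ, heqv]; exact hf0⟩
        obtain ⟨φ1, hφ1, hφ1x, hφ1y⟩ := ihC1 x y hxy (φ2 z)
        have hzne : z ≠ v.1 := fun h' => v.2 h'.symm
        refine ⟨Sum.elim φ1 (fun a => φ2 a.1), ?_, ?_⟩
        · rintro (a | a) (b | b) hadj ha hb
          · rw [oreAdj_inl_inl] at hadj
            exact hφ1 a b hadj.1 hadj.2
          · rw [oreAdj_inl_inr] at hadj
            simp only [Sum.elim_inl, Sum.elim_inr]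
            have hbv : b.1 ≠ v.1 := fun h' => hb (congrArg Sum.inr (Subtype.ext h'))
            rcases hadj with ⟨hax, hzb, -⟩ | ⟨hay, hzb, -⟩
            · rw [hax, hφ1x]
              exact hφ2 z b.1 hzb hzne hbv
            · rw [hay, hφ1y]
              exact hφ2 z b.1 hzb hzne hbv
          · rw [oreAdj_inr_inl] at hadj
            simp only [Sum.elim_inl, Sum.elim_inr]
            have hav' : a.1 ≠ v.1 := fun h' => ha (congrArg Sum.inr (Subtype.ext h'))
            rcases hadj with ⟨hbx, hza, -⟩ | ⟨hby, hza, -⟩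
            · rw [hbx, hφ1x]
              exact fun hc => hφ2 z a.1 hza hzne hav' hc.symm
            · rw [hby, hφ1y]
              exact fun hc => hφ2 z a.1 hza hzne hav' hc.symm
          · rw [oreAdj_inr_inr] at hadj
            exact hφ2 a.1 b.1 hadj (fun h' => ha (congrArg Sum.inr (Subtype.ext h')))
              (fun h' => hb (congrArg Sum.inr (Subtype.ext h')))
        · rintro (a | a) hadj
          · rw [oreAdj_inr_inl] at hadj
            simp only [Sum.elim_inl]
            rcases hadj with ⟨hax, hzv, hA⟩ | ⟨hay, hzv, hA⟩
            · rw [hax, hφ1x]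
              have h'' := hav2 z hzv.symm
              rw [hf2z, if_pos hA] at h''
              exact h''
            · rw [hay, hφ1y]
              have h'' := hav2 z hzv.symm
              rw [hf2z, if_neg hA] at h''
              exact h''
          · rw [oreAdj_inr_inr] at hadj
            simp only [Sum.elim_inr]
            have h'' := hav2 a.1 hadj
            rw [hf2ne a] at h''
            exact h''
    exact ⟨PropC_of_iso e hC, PropL4_of_iso e hL4⟩
section Transport
variable {V W : Type} {G : SimpleGraph V} {H : SimpleGraph W} (e : G ≃g H)

lemma boundary_preimage (S : Set W) :
    boundary G (⇑e ⁻¹' S) = ⇑e ⁻¹' boundary H S := by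
  ext v
  constructor
  · rintro ⟨hv, u, hu, hadj⟩
    refine ⟨hv, e u, ?_, e.map_adj_iff.mpr hadj⟩
    simpa using hu
  · rintro ⟨hv, u, hu, hadj⟩
    refine ⟨hv, e.symm u, by simpa [e.apply_symm_apply] using hu, ?_⟩
    have h3 := e.map_adj_iff (v := v) (w := e.symm u)
    rw [e.apply_symm_apply] at h3
    exact h3.mp hadj

lemma preimage_ncard_eq (S : Set W) : (⇑e ⁻¹' S).ncard = S.ncard := by
  have himg : ⇑e ⁻¹' S = (fun w => e.symm w) '' S := by
    ext v
    simp only [Set.mem_preimage, Set.mem_image]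
    constructor
    · intro hv; exact ⟨e v, hv, e.symm_apply_apply v⟩
    · rintro ⟨w, hw, rfl⟩; simpa [e.apply_symm_apply] using hw
  rw [himg, Set.ncard_image_of_injective _ e.symm.injective]

lemma collapsible_of_iso {S : Set W} (h : Collapsible H S) :
    Collapsible G (⇑e ⁻¹' S) := by
  obtain ⟨hne, hcard, hcol⟩ := h
  refine ⟨?_, ?_, ?_⟩
  · rw [Set.ne_univ_iff_exists_notMem] at hne ⊢
    obtain ⟨w, hw⟩ := hne
    exact ⟨e.symm w, by simpa [e.apply_symm_apply] using hw⟩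
  · rw [preimage_ncard_eq e S]; exact hcard
  · intro φ hφ u hu v hv
    rw [boundary_preimage] at hu hv
    have := hcol (fun w => φ (e.symm w)) ?_ (e u) hu (e v) hv
    · simpa [e.symm_apply_apply] using this
    · intro a ha b hb hadj
      have hadj' : G.Adj (e.symm a) (e.symm b) := e.symm.map_adj_iff.mpr hadj
      exact hφ _ (by simpa [e.apply_symm_apply] using ha)
        _ (by simpa [e.apply_symm_apply] using hb) hadj'

lemma nontrivialCocollapsible_of_iso {S : Set W} (h : NontrivialCocollapsible H S) :
    NontrivialCocollapsible G (⇑e ⁻¹' S) := by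
  obtain ⟨⟨hne, hnu, huniq, hcol⟩, hnt⟩ := h
  refine ⟨⟨?_, ?_, ?_, ?_⟩, ?_⟩
  · obtain ⟨w, hw⟩ := hne
    exact ⟨e.symm w, by simpa [e.apply_symm_apply] using hw⟩
  · rw [Set.ne_univ_iff_exists_notMem] at hnu ⊢
    obtain ⟨w, hw⟩ := hnu
    exact ⟨e.symm w, by simpa [e.apply_symm_apply] using hw⟩
  · intro v hv
    rw [boundary_preimage] at hv
    obtain ⟨u, ⟨huS, huadj⟩, huu⟩ := huniq (e v) hv
    refine ⟨e.symm u, ⟨by simpa [e.apply_symm_apply] using huS, ?_⟩, ?_⟩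
    · have h3 := e.map_adj_iff (v := v) (w := e.symm u)
      rw [e.apply_symm_apply] at h3
      exact h3.mp huadj
    · rintro t ⟨htS, htadj⟩
      have : e t = u := huu (e t) ⟨by simpa using htS, e.map_adj_iff.mpr htadj⟩
      rw [← this, e.symm_apply_apply]
  · intro f ⟨u, hu, v, hv, hf⟩
    rw [boundary_preimage] at hu hv
    obtain ⟨ψ, hψ, hav⟩ := hcol (fun w => f (e.symm w))
      ⟨e u, hu, e v, hv, by simpa [e.symm_apply_apply] using hf⟩
    refine ⟨fun v' => ψ (e v'), ?_, ?_⟩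
    · intro a ha b hb hadj
      exact hψ (e a) (by simpa using ha) (e b) (by simpa using hb) (e.map_adj_iff.mpr hadj)
    · intro v' hv'
      rw [boundary_preimage] at hv'
      have := hav (e v') hv'
      simpa [e.symm_apply_apply] using this
  · have hcompl : (⇑e ⁻¹' S)ᶜ = ⇑e ⁻¹' (Sᶜ) := by
      ext v; simp
    rw [hcompl, preimage_ncard_eq e (Sᶜ)]
    exact hnt

end Transport
section Lift
variable {V1 V2 : Type} (G1 : SimpleGraph V1) (G2 : SimpleGraph V2)
  (x y : V1) (z : V2) (A : Set V2) (R' : Set V2)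

/-- The lift of a set `R' ⊆ V2 ∖ {z}` into the Ore composition. -/
def liftSet : Set (V1 ⊕ {v : V2 // v ≠ z}) :=
  Sum.inr '' {a : {v : V2 // v ≠ z} | a.1 ∈ R'}

lemma mem_liftSet_inr {b : {v : V2 // v ≠ z}} :
    Sum.inr b ∈ liftSet (V1 := V1) z R' ↔ b.1 ∈ R' := by
  constructor
  · rintro ⟨a, ha, hab⟩
    rwa [← Sum.inr_injective hab]
  · intro hb
    exact ⟨b, hb, rfl⟩

lemma not_mem_liftSet_inl {u : V1} : Sum.inl u ∉ liftSet (V1 := V1) z R' := by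
  rintro ⟨a, -, hab⟩
  exact Sum.inl_ne_inr hab.symm

lemma lift_boundary (hz : z ∉ R') :
    boundary (oreCompose G1 G2 x y z A) (liftSet (V1 := V1) z R') =
      Sum.inr '' {a : {v : V2 // v ≠ z} | a.1 ∈ boundary G2 R'} := by
  classical
  ext s
  constructor
  · rintro ⟨hs, t, ht, hadj⟩
    obtain (u | b) := s
    · exact absurd hs (not_mem_liftSet_inl z R')
    · rw [mem_liftSet_inr] at hs
      refine ⟨b, ?_, rfl⟩
      obtain (u | c) := t
      · rw [oreAdj_inr_inl] at hadj
        have hzb : G2.Adj b.1 z := by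
          rcases hadj with ⟨-, h', -⟩ | ⟨-, h', -⟩ <;> exact h'.symm
        exact ⟨hs, z, hz, hzb⟩
      · rw [oreAdj_inr_inr] at hadj
        rw [mem_liftSet_inr] at ht
        exact ⟨hs, c.1, ht, hadj⟩
  · rintro ⟨b, ⟨hbR, u, huR, hadj⟩, rfl⟩
    refine ⟨(mem_liftSet_inr z R').mpr hbR, ?_⟩
    by_cases huz : u = z
    · by_cases hbA : b.1 ∈ A
      · exact ⟨Sum.inl x, not_mem_liftSet_inl z R',
          (oreAdj_inr_inl G1 G2 x y z A).mpr (Or.inl ⟨rfl, (huz ▸ hadj).symm, hbA⟩)⟩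
      · exact ⟨Sum.inl y, not_mem_liftSet_inl z R',
          (oreAdj_inr_inl G1 G2 x y z A).mpr (Or.inr ⟨rfl, (huz ▸ hadj).symm, hbA⟩)⟩
    · refine ⟨Sum.inr ⟨u, huz⟩, ?_, (oreAdj_inr_inr G1 G2 x y z A).mpr hadj⟩
      rw [mem_liftSet_inr]
      exact huR

lemma liftSet_ncard (hz : z ∉ R') : (liftSet (V1 := V1) z R').ncard = R'.ncard := by
  have h1 : R' = Subtype.val '' {a : {v : V2 // v ≠ z} | a.1 ∈ R'} := by
    ext b
    constructor
    · intro hb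
      exact ⟨⟨b, fun hbz => hz (hbz ▸ hb)⟩, hb, rfl⟩
    · rintro ⟨a, ha, rfl⟩
      exact ha
  rw [liftSet, Set.ncard_image_of_injective _ Sum.inr_injective]
  conv_rhs => rw [h1]
  rw [Set.ncard_image_of_injective _ Subtype.coe_injective]

lemma lift_collapsible (hz : z ∉ R') (h : Collapsible G2 R') :
    Collapsible (oreCompose G1 G2 x y z A) (liftSet (V1 := V1) z R') := by
  classical
  obtain ⟨hne, hcard, hcol⟩ := h
  refine ⟨?_, ?_, ?_⟩
  · rw [Set.ne_univ_iff_exists_notMem]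
    exact ⟨Sum.inl x, not_mem_liftSet_inl z R'⟩
  · rw [liftSet_ncard z R' hz]; exact hcard
  · intro φ hφ u hu v hv
    rw [lift_boundary G1 G2 x y z A R' hz] at hu hv
    obtain ⟨bu, hbu, rfl⟩ := hu
    obtain ⟨bv, hbv, rfl⟩ := hv
    have hψ := hcol (fun a => if ha : a = z then 0 else φ (Sum.inr ⟨a, ha⟩)) ?_
      bu.1 hbu bv.1 hbv
    · simpa only [dif_neg bu.2, dif_neg bv.2] using hψ
    · intro a ha b hb hadj
      have haz : a ≠ z := fun h' => hz (h' ▸ ha)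
      have hbz : b ≠ z := fun h' => hz (h' ▸ hb)
      simp only [dif_neg haz, dif_neg hbz]
      exact hφ _ ((mem_liftSet_inr z R').mpr ha) _ ((mem_liftSet_inr z R').mpr hb)
        ((oreAdj_inr_inr G1 G2 x y z A).mpr hadj)

lemma lift_ntcocollapsible [Finite V1] [Finite V2] (hz : z ∉ R') (hxy : x ≠ y)
    (h : Cocollapsible G2 R') :
    NontrivialCocollapsible (oreCompose G1 G2 x y z A) (liftSet (V1 := V1) z R') := by
  classical
  obtain ⟨hne, hnu, huniq, hcol⟩ := h
  refine ⟨⟨?_, ?_, ?_, ?_⟩, ?_⟩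
  · obtain ⟨r, hr⟩ := hne
    exact ⟨Sum.inr ⟨r, fun h' => hz (h' ▸ hr)⟩, (mem_liftSet_inr z R').mpr hr⟩
  · rw [Set.ne_univ_iff_exists_notMem]
    exact ⟨Sum.inl x, not_mem_liftSet_inl z R'⟩
  · intro s hs
    rw [lift_boundary G1 G2 x y z A R' hz] at hs
    obtain ⟨b, hb, rfl⟩ := hs
    obtain ⟨u0, ⟨hu0R, hu0adj⟩, hu0u⟩ := huniq b.1 hb
    have toU0 : ∀ t, t ∉ liftSet (V1 := V1) z R' →
        (oreCompose G1 G2 x y z A).Adj (Sum.inr b) t →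
        (∃ u', (t = Sum.inl x ∧ b.1 ∈ A ∨ t = Sum.inl y ∧ b.1 ∉ A) ∧ u' = z ∧ u' = u0) ∨
        (∃ c : {v : V2 // v ≠ z}, t = Sum.inr c ∧ c.1 = u0) := by
      rintro (u | c) ht hadj
      · rw [oreAdj_inr_inl] at hadj
        rcases hadj with ⟨hux, hzb, hA⟩ | ⟨huy, hzb, hA⟩
        · exact Or.inl ⟨z, Or.inl ⟨by rw [hux], hA⟩, rfl, hu0u z ⟨hz, hzb.symm⟩⟩
        · exact Or.inl ⟨z, Or.inr ⟨by rw [huy], hA⟩, rfl, hu0u z ⟨hz, hzb.symm⟩⟩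
      · rw [oreAdj_inr_inr] at hadj
        rw [mem_liftSet_inr] at ht
        exact Or.inr ⟨c, rfl, hu0u c.1 ⟨ht, hadj⟩⟩
    by_cases hu0z : u0 = z
    · -- the unique outside neighbour of b is z; in H it is x or y
      by_cases hbA : b.1 ∈ A
      · refine ⟨Sum.inl x, ⟨not_mem_liftSet_inl z R', (oreAdj_inr_inl G1 G2 x y z A).mpr
          (Or.inl ⟨rfl, (hu0z ▸ hu0adj).symm, hbA⟩)⟩, ?_⟩
        rintro t ⟨ht, hadj⟩
        rcases toU0 t ht hadj with ⟨u', hcase, -, -⟩ | ⟨c, rfl, hc⟩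
        · rcases hcase with ⟨rfl, -⟩ | ⟨rfl, hA'⟩
          · rfl
          · exact absurd hbA hA'
        · exact absurd (hc.trans hu0z) c.2
      · refine ⟨Sum.inl y, ⟨not_mem_liftSet_inl z R', (oreAdj_inr_inl G1 G2 x y z A).mpr
          (Or.inr ⟨rfl, (hu0z ▸ hu0adj).symm, hbA⟩)⟩, ?_⟩
        rintro t ⟨ht, hadj⟩
        rcases toU0 t ht hadj with ⟨u', hcase, -, -⟩ | ⟨c, rfl, hc⟩
        · rcases hcase with ⟨rfl, hA'⟩ | ⟨rfl, -⟩
          · exact absurd hA' hbA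
          · rfl
        · exact absurd (hc.trans hu0z) c.2
    · refine ⟨Sum.inr ⟨u0, hu0z⟩, ⟨?_, (oreAdj_inr_inr G1 G2 x y z A).mpr hu0adj⟩, ?_⟩
      · rw [mem_liftSet_inr]
        exact hu0R
      · rintro t ⟨ht, hadj⟩
        rcases toU0 t ht hadj with ⟨u', -, h1', h2'⟩ | ⟨c, rfl, hc⟩
        · exact absurd (h2'.symm.trans h1') hu0z
        · rw [Sum.inr.injEq]
          exact Subtype.ext hc
  · intro f ⟨s1, hs1, s2, hs2, hf12⟩
    rw [lift_boundary G1 G2 x y z A R' hz] at hs1 hs2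
    obtain ⟨b1, hb1, rfl⟩ := hs1
    obtain ⟨b2, hb2, rfl⟩ := hs2
    obtain ⟨ψ, hψ, hav⟩ := hcol (fun a => if ha : a = z then 0 else f (Sum.inr ⟨a, ha⟩))
      ⟨b1.1, hb1, b2.1, hb2, by simpa only [dif_neg b1.2, dif_neg b2.2] using hf12⟩
    refine ⟨Sum.elim (fun _ => 0) (fun a => ψ a.1), ?_, ?_⟩
    · intro u hu v hv hadj
      obtain (u' | bu) := u
      · exact absurd hu (not_mem_liftSet_inl z R')
      obtain (v' | bv) := v
      · exact absurd hv (not_mem_liftSet_inl z R')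
      rw [mem_liftSet_inr] at hu hv
      rw [oreAdj_inr_inr] at hadj
      exact hψ bu.1 hu bv.1 hv hadj
    · intro s hs
      rw [lift_boundary G1 G2 x y z A R' hz] at hs
      obtain ⟨b, hb, rfl⟩ := hs
      have h'' := hav b.1 hb
      simpa only [dif_neg b.2, Sum.elim_inr] using h''
  · rw [Set.one_lt_ncard_iff (Set.toFinite _)]
    refine ⟨Sum.inl x, Sum.inl y, not_mem_liftSet_inl z R', not_mem_liftSet_inl z R', ?_⟩
    simpa using hxy

end Lift
section MainPieces
variable {V1 V2 : Type} (G1 : SimpleGraph V1) (G2 : SimpleGraph V2)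
  (x y : V1) (z : V2) (A : Set V2) {p q : V2}

lemma cocollapsible_compl_z (hL4 : PropL4 G2) (hzp : G2.Adj z p) :
    Cocollapsible G2 {v | v ≠ z} := by
  have hbd : boundary G2 {v | v ≠ z} = {v | G2.Adj z v} := by
    ext v
    constructor
    · rintro ⟨hv, u, hu, hadj⟩
      have huz : u = z := not_not.mp hu
      exact (huz ▸ hadj).symm
    · intro hv
      exact ⟨fun h' => (G2.ne_of_adj hv) h'.symm, z, by simp, hv.symm⟩
  refine ⟨⟨p, fun h' => (G2.ne_of_adj hzp) h'.symm⟩, ?_, ?_, ?_⟩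
  · rw [Set.ne_univ_iff_exists_notMem]
    exact ⟨z, by simp⟩
  · intro v hv
    rw [hbd] at hv
    refine ⟨z, ⟨by simp, hv.symm⟩, ?_⟩
    rintro t ⟨ht, -⟩
    exact not_not.mp ht
  · intro f ⟨u, hu, v, hv, hf⟩
    rw [hbd] at hu hv
    obtain ⟨φ, hφ, hav⟩ := hL4 z f ⟨u, hu, v, hv, hf⟩
    refine ⟨φ, fun a ha b hb hadj => hφ a b hadj ha hb, fun v' hv' => ?_⟩
    rw [hbd] at hv'
    exact hav v' hv'

lemma collapsible_inl [Finite V1] [Finite V2] (hxy : G1.Adj x y)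
    (hno : NoK3Col G1) (hzp : G2.Adj z p) :
    Collapsible (oreCompose G1 G2 x y z A) (Set.range Sum.inl) := by
  classical
  have hxyne : x ≠ y := G1.ne_of_adj hxy
  refine ⟨?_, ?_, ?_⟩
  · rw [Set.ne_univ_iff_exists_notMem]
    refine ⟨Sum.inr ⟨p, fun h' => (G2.ne_of_adj hzp) h'.symm⟩, ?_⟩
    rintro ⟨a, ha⟩
    exact Sum.inl_ne_inr ha
  · have h1 : 1 < (Set.range (Sum.inl : V1 → V1 ⊕ {v : V2 // v ≠ z})).ncard := by
      rw [Set.one_lt_ncard_iff (Set.toFinite _)]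
      exact ⟨Sum.inl x, Sum.inl y, Set.mem_range_self _, Set.mem_range_self _,
        by simpa using hxyne⟩
    omega
  · intro φ hφ u hu v hv
    have hxyeq : φ (Sum.inl x) = φ (Sum.inl y) := by
      by_contra hne
      apply hno
      refine ⟨fun a => φ (Sum.inl a), fun a b hab hc => ?_⟩
      by_cases hp' : (a = x ∧ b = y) ∨ (a = y ∧ b = x)
      · rcases hp' with ⟨ha, hb⟩ | ⟨ha, hb⟩ <;> rw [ha, hb] at hc
        · exact hne hc
        · exact hne hc.symm
      · exact hφ _ (Set.mem_range_self _) _ (Set.mem_range_self _)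
          ((oreAdj_inl_inl G1 G2 x y z A).mpr ⟨hab, hp'⟩) hc
    have key : ∀ s ∈ boundary (oreCompose G1 G2 x y z A) (Set.range Sum.inl),
        s = Sum.inl x ∨ s = Sum.inl y := by
      rintro s ⟨hs, t, ht, hadj⟩
      obtain ⟨a, rfl⟩ := hs
      obtain (c | b) := t
      · exact absurd (Set.mem_range_self c) ht
      · rw [oreAdj_inl_inr] at hadj
        rcases hadj with ⟨h', -, -⟩ | ⟨h', -, -⟩
        · exact Or.inl (congrArg Sum.inl h')
        · exact Or.inr (congrArg Sum.inl h')
    rcases key u hu with h' | h' <;> rcases key v hv with h'' | h'' <;> rw [h', h'']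
    · exact hxyeq
    · exact hxyeq.symm

lemma edge_side_minus_y [Finite V1] [Finite V2] (hxy : G1.Adj x y) (hL4G1 : PropL4 G1)
    (hzp : G2.Adj z p) (hpA : p ∈ A) (hsingA : ∀ b, G2.Adj z b → b ∈ A → b = p) :
    NontrivialCocollapsible (oreCompose G1 G2 x y z A) (Sum.inl '' {a | a ≠ y}) := by
  classical
  have hxyne : x ≠ y := G1.ne_of_adj hxy
  set H := oreCompose G1 G2 x y z A with hH
  set S : Set _ := Sum.inl '' {a : V1 | a ≠ y} with hS
  have memS_inl : ∀ a : V1, Sum.inl a ∈ S ↔ a ≠ y := by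
    intro a
    constructor
    · rintro ⟨a', ha', haa⟩
      rwa [← Sum.inl_injective haa]
    · intro ha
      exact ⟨a, ha, rfl⟩
  have memS_inr : ∀ b : {v : V2 // v ≠ z}, Sum.inr b ∉ S := by
    rintro b ⟨a', -, haa⟩
    exact Sum.inl_ne_inr haa
  have pne : (p : V2) ≠ z := fun h' => (G2.ne_of_adj hzp) h'.symm
  have bdry : boundary H S = Sum.inl '' {a | G1.Adj y a} := by
    ext s
    constructor
    · rintro ⟨hs, t, ht, hadj⟩
      obtain (a | b) := s
      · rw [memS_inl] at hs
        refine ⟨a, ?_, rfl⟩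
        obtain (c | b') := t
        · rw [oreAdj_inl_inl] at hadj
          have hcy : c = y := by
            by_contra hcy
            exact ht ((memS_inl c).mpr hcy)
          exact (hcy ▸ hadj.1).symm
        · rw [oreAdj_inl_inr] at hadj
          rcases hadj with ⟨hax, -, -⟩ | ⟨hay, -, -⟩
          · rw [hax]; exact hxy.symm
          · exact absurd hay hs
      · exact absurd hs (memS_inr b)
    · rintro ⟨a, hya, rfl⟩
      have hay : a ≠ y := fun h' => (G1.ne_of_adj hya) h'.symm
      refine ⟨(memS_inl a).mpr hay, ?_⟩
      by_cases hax : a = x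
      · exact ⟨Sum.inr ⟨p, pne⟩, memS_inr _,
          (oreAdj_inl_inr G1 G2 x y z A).mpr (Or.inl ⟨hax, hzp, hpA⟩)⟩
      · refine ⟨Sum.inl y, fun hc => ((memS_inl y).mp hc) rfl,
          (oreAdj_inl_inl G1 G2 x y z A).mpr ⟨hya.symm, ?_⟩⟩
        rintro (⟨h1, -⟩ | ⟨h1, -⟩)
        · exact hax h1
        · exact hay h1
  refine ⟨⟨?_, ?_, ?_, ?_⟩, ?_⟩
  · exact ⟨Sum.inl x, (memS_inl x).mpr hxyne⟩
  · rw [Set.ne_univ_iff_exists_notMem]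
    exact ⟨Sum.inr ⟨p, pne⟩, memS_inr _⟩
  · intro s hs
    rw [bdry] at hs
    obtain ⟨a, hya, rfl⟩ := hs
    have hay : a ≠ y := fun h' => (G1.ne_of_adj hya) h'.symm
    by_cases hax : a = x
    · refine ⟨Sum.inr ⟨p, pne⟩, ⟨memS_inr _,
        (oreAdj_inl_inr G1 G2 x y z A).mpr (Or.inl ⟨hax, hzp, hpA⟩)⟩, ?_⟩
      rintro (c | b) ⟨ht, hadj⟩
      · rw [oreAdj_inl_inl] at hadj
        have hcy : c = y := by
          by_contra hcy
          exact ht ((memS_inl c).mpr hcy)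
        exfalso
        refine hadj.2 (Or.inl ⟨hax, hcy⟩)
      · rw [oreAdj_inl_inr] at hadj
        rcases hadj with ⟨-, hzb, hbA⟩ | ⟨hay', -, -⟩
        · rw [Sum.inr.injEq]
          exact Subtype.ext (hsingA b.1 hzb hbA)
        · exact absurd (hax.symm.trans hay') hxyne
    · refine ⟨Sum.inl y, ⟨fun hc => ((memS_inl y).mp hc) rfl,
        (oreAdj_inl_inl G1 G2 x y z A).mpr ⟨hya.symm, ?_⟩⟩, ?_⟩
      · rintro (⟨h1, -⟩ | ⟨h1, -⟩)
        · exact hax h1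
        · exact hay h1
      · rintro (c | b) ⟨ht, hadj⟩
        · have hcy : c = y := by
            by_contra hcy
            exact ht ((memS_inl c).mpr hcy)
          rw [hcy]
        · rw [oreAdj_inl_inr] at hadj
          rcases hadj with ⟨h1, -, -⟩ | ⟨h1, -, -⟩
          · exact absurd h1 hax
          · exact absurd h1 hay
  · intro f ⟨s1, hs1, s2, hs2, hf12⟩
    rw [bdry] at hs1 hs2
    obtain ⟨a1, ha1, rfl⟩ := hs1
    obtain ⟨a2, ha2, rfl⟩ := hs2
    obtain ⟨φ1, hφ1, hav1⟩ := hL4G1 y (fun a => f (Sum.inl a)) ⟨a1, ha1, a2, ha2, hf12⟩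
    refine ⟨Sum.elim φ1 (fun _ => 0), ?_, ?_⟩
    · intro u hu v hv hadj
      obtain (a | b) := u
      swap
      · exact absurd hu (memS_inr b)
      obtain (c | b) := v
      swap
      · exact absurd hv (memS_inr b)
      rw [oreAdj_inl_inl] at hadj
      exact hφ1 a c hadj.1 ((memS_inl a).mp hu) ((memS_inl c).mp hv)
    · intro s hs
      rw [bdry] at hs
      obtain ⟨a, hya, rfl⟩ := hs
      exact hav1 a hya
  · rw [Set.one_lt_ncard_iff (Set.toFinite _)]
    refine ⟨Sum.inl y, Sum.inr ⟨p, pne⟩, ?_, memS_inr _, by simp⟩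
    simp only [Set.mem_compl_iff]
    exact fun hc => ((memS_inl y).mp hc) rfl

lemma edge_side_minus_x [Finite V1] [Finite V2] (hxy : G1.Adj x y) (hL4G1 : PropL4 G1)
    (hzq : G2.Adj z q) (hqA : q ∉ A) (hsingQ : ∀ b, G2.Adj z b → b ∉ A → b = q) :
    NontrivialCocollapsible (oreCompose G1 G2 x y z A) (Sum.inl '' {a | a ≠ x}) := by
  classical
  have hxyne : x ≠ y := G1.ne_of_adj hxy
  set H := oreCompose G1 G2 x y z A with hH
  set S : Set _ := Sum.inl '' {a : V1 | a ≠ x} with hS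
  have memS_inl : ∀ a : V1, Sum.inl a ∈ S ↔ a ≠ x := by
    intro a
    constructor
    · rintro ⟨a', ha', haa⟩
      rwa [← Sum.inl_injective haa]
    · intro ha
      exact ⟨a, ha, rfl⟩
  have memS_inr : ∀ b : {v : V2 // v ≠ z}, Sum.inr b ∉ S := by
    rintro b ⟨a', -, haa⟩
    exact Sum.inl_ne_inr haa
  have qne : (q : V2) ≠ z := fun h' => (G2.ne_of_adj hzq) h'.symm
  have bdry : boundary H S = Sum.inl '' {a | G1.Adj x a} := by
    ext s
    constructor
    · rintro ⟨hs, t, ht, hadj⟩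
      obtain (a | b) := s
      · rw [memS_inl] at hs
        refine ⟨a, ?_, rfl⟩
        obtain (c | b') := t
        · rw [oreAdj_inl_inl] at hadj
          have hcy : c = x := by
            by_contra hcy
            exact ht ((memS_inl c).mpr hcy)
          exact (hcy ▸ hadj.1).symm
        · rw [oreAdj_inl_inr] at hadj
          rcases hadj with ⟨hax, -, -⟩ | ⟨hay, -, -⟩
          · exact absurd hax hs
          · rw [hay]; exact hxy
      · exact absurd hs (memS_inr b)
    · rintro ⟨a, hya, rfl⟩
      have hax : a ≠ x := fun h' => (G1.ne_of_adj hya) h'.symm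
      refine ⟨(memS_inl a).mpr hax, ?_⟩
      by_cases hay : a = y
      · exact ⟨Sum.inr ⟨q, qne⟩, memS_inr _,
          (oreAdj_inl_inr G1 G2 x y z A).mpr (Or.inr ⟨hay, hzq, hqA⟩)⟩
      · refine ⟨Sum.inl x, fun hc => ((memS_inl x).mp hc) rfl,
          (oreAdj_inl_inl G1 G2 x y z A).mpr ⟨hya.symm, ?_⟩⟩
        rintro (⟨h1, -⟩ | ⟨h1, -⟩)
        · exact hax h1
        · exact hay h1
  refine ⟨⟨?_, ?_, ?_, ?_⟩, ?_⟩
  · exact ⟨Sum.inl y, (memS_inl y).mpr (Ne.symm hxyne)⟩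
  · rw [Set.ne_univ_iff_exists_notMem]
    exact ⟨Sum.inr ⟨q, qne⟩, memS_inr _⟩
  · intro s hs
    rw [bdry] at hs
    obtain ⟨a, hya, rfl⟩ := hs
    have hax : a ≠ x := fun h' => (G1.ne_of_adj hya) h'.symm
    by_cases hay : a = y
    · refine ⟨Sum.inr ⟨q, qne⟩, ⟨memS_inr _,
        (oreAdj_inl_inr G1 G2 x y z A).mpr (Or.inr ⟨hay, hzq, hqA⟩)⟩, ?_⟩
      rintro (c | b) ⟨ht, hadj⟩
      · rw [oreAdj_inl_inl] at hadj
        have hcy : c = x := by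
          by_contra hcy
          exact ht ((memS_inl c).mpr hcy)
        exfalso
        exact hadj.2 (Or.inr ⟨hay, hcy⟩)
      · rw [oreAdj_inl_inr] at hadj
        rcases hadj with ⟨hay', -, -⟩ | ⟨-, hzb, hbA⟩
        · exact absurd (hay.symm.trans hay') (Ne.symm hxyne)
        · rw [Sum.inr.injEq]
          exact Subtype.ext (hsingQ b.1 hzb hbA)
    · refine ⟨Sum.inl x, ⟨fun hc => ((memS_inl x).mp hc) rfl,
        (oreAdj_inl_inl G1 G2 x y z A).mpr ⟨hya.symm, ?_⟩⟩, ?_⟩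
      · rintro (⟨h1, -⟩ | ⟨h1, -⟩)
        · exact hax h1
        · exact hay h1
      · rintro (c | b) ⟨ht, hadj⟩
        · have hcy : c = x := by
            by_contra hcy
            exact ht ((memS_inl c).mpr hcy)
          rw [hcy]
        · rw [oreAdj_inl_inr] at hadj
          rcases hadj with ⟨h1, -, -⟩ | ⟨h1, -, -⟩
          · exact absurd h1 hax
          · exact absurd h1 hay
  · intro f ⟨s1, hs1, s2, hs2, hf12⟩
    rw [bdry] at hs1 hs2
    obtain ⟨a1, ha1, rfl⟩ := hs1
    obtain ⟨a2, ha2, rfl⟩ := hs2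
    obtain ⟨φ1, hφ1, hav1⟩ := hL4G1 x (fun a => f (Sum.inl a)) ⟨a1, ha1, a2, ha2, hf12⟩
    refine ⟨Sum.elim φ1 (fun _ => 0), ?_, ?_⟩
    · intro u hu v hv hadj
      obtain (a | b) := u
      swap
      · exact absurd hu (memS_inr b)
      obtain (c | b) := v
      swap
      · exact absurd hv (memS_inr b)
      rw [oreAdj_inl_inl] at hadj
      exact hφ1 a c hadj.1 ((memS_inl a).mp hu) ((memS_inl c).mp hv)
    · intro s hs
      rw [bdry] at hs
      obtain ⟨a, hya, rfl⟩ := hs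
      exact hav1 a hya
  · rw [Set.one_lt_ncard_iff (Set.toFinite _)]
    refine ⟨Sum.inl x, Sum.inr ⟨q, qne⟩, ?_, memS_inr _, by simp⟩
    simp only [Set.mem_compl_iff]
    exact fun hc => ((memS_inl x).mp hc) rfl

end MainPieces
lemma fin4_five_aux : ∀ i1 i2 i3 i4 i5 : Fin 4, i1 = i2 ∨ i1 = i3 ∨ i1 = i4 ∨ i1 = i5 ∨
    i2 = i3 ∨ i2 = i4 ∨ i2 = i5 ∨ i3 = i4 ∨ i3 = i5 ∨ i4 = i5 := by decide

lemma fin4_five : ∀ i1 i2 i3 i4 i5 : Fin 4, i1 ≠ i2 → i1 ≠ i3 → i1 ≠ i4 → i1 ≠ i5 →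
    i2 ≠ i3 → i2 ≠ i4 → i2 ≠ i5 → i3 ≠ i4 → i3 ≠ i5 → i4 ≠ i5 → False := by
  intro i1 i2 i3 i4 i5 h1 h2 h3 h4 h5 h6 h7 h8 h9 h10
  rcases fin4_five_aux i1 i2 i3 i4 i5 with h|h|h|h|h|h|h|h|h|h
  exacts [h1 h, h2 h, h3 h, h4 h, h5 h, h6 h, h7 h, h8 h, h9 h, h10 h]

theorem fourOre_main {V : Type} {G : SimpleGraph V} (hOre : IsFourOre G) :
    ∀ (_ : Finite V) (_ : ¬ Nonempty (G ≃g completeGraph (Fin 4))) (t1 t2 t3 : V),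
      G.Adj t1 t2 → G.Adj t1 t3 → G.Adj t2 t3 →
      ∃ R : Set V, R ⊆ (({t1, t2, t3} : Set V)ᶜ : Set V) ∧
        (Collapsible G R ∨ NontrivialCocollapsible G R) := by
  classical
  induction hOre with
  | k4 G hiso => exact fun _ hK4 => absurd hiso hK4
  | comp G G1 G2 h1 h2 hcomp ih1 ih2 =>
    rename_i V0 V1 V2
    intro hfin hK4 t1 t2 t3 h12 h13 h23
    obtain ⟨x, y, z, A, hxy, ⟨p, hzp, hpA⟩, ⟨q, hzq, hqA⟩, ⟨e⟩⟩ := hcomp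
    set H := oreCompose G1 G2 x y z A with hH
    have hxyne : x ≠ y := G1.ne_of_adj hxy
    haveI := hfin
    haveI hfinW := Finite.of_equiv _ e.toEquiv
    haveI hfinV1 := Finite.of_injective (fun a => e.symm (Sum.inl a))
      (e.symm.injective.comp Sum.inl_injective)
    haveI hfinSub := Finite.of_injective (fun b => e.symm (Sum.inr b))
      (e.symm.injective.comp Sum.inr_injective)
    haveI hfinV2 := Finite.of_injective
      (fun b => if hb : b = z then (Sum.inl x : V1 ⊕ {v // v ≠ z}) else Sum.inr ⟨b, hb⟩)
      (by
        intro a b hab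
        by_cases ha : a = z <;> by_cases hb : b = z
        · exact ha.trans hb.symm
        · simp only [dif_pos ha, dif_neg hb] at hab
          exact absurd hab (fun h' => Sum.inl_ne_inr h')
        · simp only [dif_neg ha, dif_pos hb] at hab
          exact absurd hab (fun h' => Sum.inr_ne_inl h')
        · simp only [dif_neg ha, dif_neg hb, Sum.inr.injEq] at hab
          exact Subtype.ext_iff.mp hab)
    have hL4G1 : PropL4 G1 := (fourOre_propC_propL4 h1).2
    have hL4G2 : PropL4 G2 := (fourOre_propC_propL4 h2).2
    have hnoG1 : NoK3Col G1 := fourOre_noK3Col h1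
    have e12 : H.Adj (e t1) (e t2) := e.map_adj_iff.mpr h12
    have e13 : H.Adj (e t1) (e t3) := e.map_adj_iff.mpr h13
    have e23 : H.Adj (e t2) (e t3) := e.map_adj_iff.mpr h23
    have contra2 : ∀ (u v : V1) (w : {v' // v' ≠ z}), H.Adj (Sum.inl u) (Sum.inl v) →
        H.Adj (Sum.inl u) (Sum.inr w) → H.Adj (Sum.inl v) (Sum.inr w) → False := by
      intro u v w huv huw hvw
      rw [oreAdj_inl_inl] at huv
      rw [oreAdj_inl_inr] at huw hvw
      rcases huw with ⟨hux, -, hA⟩ | ⟨huy, -, hA⟩ <;>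
        rcases hvw with ⟨hvx, -, hA'⟩ | ⟨hvy, -, hA'⟩
      · exact (G1.ne_of_adj huv.1) (hux.trans hvx.symm)
      · exact huv.2 (Or.inl ⟨hux, hvy⟩)
      · exact huv.2 (Or.inr ⟨huy, hvx⟩)
      · exact (G1.ne_of_adj huv.1) (huy.trans hvy.symm)
    have mixed : ∀ (a : V1) (b c : {v' // v' ≠ z}), H.Adj (Sum.inl a) (Sum.inr b) →
        H.Adj (Sum.inl a) (Sum.inr c) → H.Adj (Sum.inr b) (Sum.inr c) →
        ∃ S : Set (V1 ⊕ {v' // v' ≠ z}),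
          (∀ w' ∈ S, w' ≠ Sum.inl a ∧ w' ≠ Sum.inr b ∧ w' ≠ Sum.inr c) ∧
          (Collapsible H S ∨ NontrivialCocollapsible H S) := by
      intro a b c hab hac hbc
      rw [oreAdj_inl_inr] at hab hac
      rw [oreAdj_inr_inr] at hbc
      have hzb : G2.Adj z b.1 := by rcases hab with ⟨-, h', -⟩ | ⟨-, h', -⟩ <;> exact h'
      have hzc : G2.Adj z c.1 := by rcases hac with ⟨-, h', -⟩ | ⟨-, h', -⟩ <;> exact h'
      by_cases hG2K4 : Nonempty (G2 ≃g completeGraph (Fin 4))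
      · obtain ⟨e2⟩ := hG2K4
        have e2ne : ∀ {i j : V2}, i ≠ j → e2 i ≠ e2 j := fun hij h' => hij (e2.injective h')
        rcases hab with ⟨hax, -, hbA⟩ | ⟨hay, -, hbA⟩
        · -- a = x : both b and c are on the A side
          have hcA : c.1 ∈ A := by
            rcases hac with ⟨-, -, h'⟩ | ⟨hay', -, -⟩
            · exact h'
            · exact absurd (hax.symm.trans hay') hxyne
          have hsingQ : ∀ b', G2.Adj z b' → b' ∉ A → b' = q := by
            intro b' hzb' hb'A
            by_contra hbq
            exact fin4_five (e2 z) (e2 b.1) (e2 c.1) (e2 b') (e2 q)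
              (e2ne (Ne.symm b.2)) (e2ne (Ne.symm c.2)) (e2ne (G2.ne_of_adj hzb'))
              (e2ne (G2.ne_of_adj hzq)) (e2ne (G2.ne_of_adj hbc))
              (e2ne (fun h' => hb'A (h' ▸ hbA))) (e2ne (fun h' => hqA (h' ▸ hbA)))
              (e2ne (fun h' => hb'A (h' ▸ hcA))) (e2ne (fun h' => hqA (h' ▸ hcA)))
              (e2ne hbq)
          refine ⟨Sum.inl '' {a' | a' ≠ x}, ?_, Or.inr
            (edge_side_minus_x G1 G2 x y z A hxy hL4G1 hzq hqA hsingQ)⟩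
          rintro w' ⟨a', ha', rfl⟩
          exact ⟨fun h' => ha' ((Sum.inl_injective h').trans hax),
            fun h' => Sum.inl_ne_inr h', fun h' => Sum.inl_ne_inr h'⟩
        · -- a = y : both b and c are off the A side
          have hcA : c.1 ∉ A := by
            rcases hac with ⟨hax', -, -⟩ | ⟨-, -, h'⟩
            · exact absurd (hax'.symm.trans hay) hxyne
            · exact h'
          have hsingP : ∀ b', G2.Adj z b' → b' ∈ A → b' = p := by
            intro b' hzb' hb'A
            by_contra hbp
            exact fin4_five (e2 z) (e2 b.1) (e2 c.1) (e2 b') (e2 p)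
              (e2ne (Ne.symm b.2)) (e2ne (Ne.symm c.2)) (e2ne (G2.ne_of_adj hzb'))
              (e2ne (G2.ne_of_adj hzp)) (e2ne (G2.ne_of_adj hbc))
              (e2ne (fun h' => hbA (h' ▸ hb'A))) (e2ne (fun h' => hbA (h' ▸ hpA)))
              (e2ne (fun h' => hcA (h' ▸ hb'A))) (e2ne (fun h' => hcA (h' ▸ hpA)))
              (e2ne hbp)
          refine ⟨Sum.inl '' {a' | a' ≠ y}, ?_, Or.inr
            (edge_side_minus_y G1 G2 x y z A hxy hL4G1 hzp hpA hsingP)⟩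
          rintro w' ⟨a', ha', rfl⟩
          exact ⟨fun h' => ha' ((Sum.inl_injective h').trans hay),
            fun h' => Sum.inl_ne_inr h', fun h' => Sum.inl_ne_inr h'⟩
      · -- recurse into G2 with the triangle z, b, c
        obtain ⟨R', hR'sub, hR'or⟩ := ih2 inferInstance hG2K4 z b.1 c.1 hzb hzc hbc
        have hzR' : z ∉ R' := fun h' => (hR'sub h') (by simp)
        have hbR' : b.1 ∉ R' := fun h' => (hR'sub h') (by simp)
        have hcR' : c.1 ∉ R' := fun h' => (hR'sub h') (by simp)
        refine ⟨liftSet z R', ?_, ?_⟩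
        · rintro (u' | b') hw'
          · exact absurd hw' (not_mem_liftSet_inl z R')
          · rw [mem_liftSet_inr] at hw'
            refine ⟨fun h' => Sum.inr_ne_inl h', ?_, ?_⟩
            · exact fun h' => hbR' ((Subtype.ext_iff.mp (Sum.inr_injective h')) ▸ hw')
            · exact fun h' => hcR' ((Subtype.ext_iff.mp (Sum.inr_injective h')) ▸ hw')
        · rcases hR'or with h' | h'
          · exact Or.inl (lift_collapsible G1 G2 x y z A R' hzR' h')
          · exact Or.inr (lift_ntcocollapsible G1 G2 x y z A R' hzR' hxyne h'.1)
    have key : ∃ S : Set (V1 ⊕ {v' // v' ≠ z}),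
        (∀ w' ∈ S, w' ≠ e t1 ∧ w' ≠ e t2 ∧ w' ≠ e t3) ∧
        (Collapsible H S ∨ NontrivialCocollapsible H S) := by
      rcases he1 : e t1 with a1 | b1 <;> rcases he2 : e t2 with a2 | b2 <;>
        rcases he3 : e t3 with a3 | b3 <;> rw [he1, he2] at e12 <;>
        rw [he1, he3] at e13 <;> rw [he2, he3] at e23
      · -- all on the edge side
        refine ⟨liftSet z {v | v ≠ z}, ?_, Or.inr (lift_ntcocollapsible G1 G2 x y z A _
          (by simp) hxyne (cocollapsible_compl_z G2 z hL4G2 hzp))⟩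
        rintro (u' | b') hw'
        · exact absurd hw' (not_mem_liftSet_inl z _)
        · exact ⟨fun h' => Sum.inr_ne_inl h', fun h' => Sum.inr_ne_inl h',
            fun h' => Sum.inr_ne_inl h'⟩
      · exact (contra2 a1 a2 b3 e12 e13 e23).elim
      · exact (contra2 a1 a3 b2 e13 e12 e23.symm).elim
      · -- t1 on the edge side, t2 t3 on the split side
        obtain ⟨S, hSsub, hSor⟩ := mixed a1 b2 b3 e12 e13 e23
        exact ⟨S, fun w' hw' => (hSsub w' hw'), hSor⟩
      · exact (contra2 a2 a3 b1 e23 e12.symm e13.symm).elim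
      · -- t2 on the edge side
        obtain ⟨S, hSsub, hSor⟩ := mixed a2 b1 b3 e12.symm e23 e13
        exact ⟨S, fun w' hw' => ⟨(hSsub w' hw').2.1, (hSsub w' hw').1, (hSsub w' hw').2.2⟩,
          hSor⟩
      · -- t3 on the edge side
        obtain ⟨S, hSsub, hSor⟩ := mixed a3 b1 b2 e13.symm e23.symm e12
        exact ⟨S, fun w' hw' => ⟨(hSsub w' hw').2.1, (hSsub w' hw').2.2, (hSsub w' hw').1⟩,
          hSor⟩
      · -- all on the split side
        refine ⟨Set.range Sum.inl, ?_, Or.inl (collapsible_inl G1 G2 x y z A hxy hnoG1 hzp)⟩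
        rintro w' ⟨a', rfl⟩
        exact ⟨fun h' => Sum.inl_ne_inr h', fun h' => Sum.inl_ne_inr h',
          fun h' => Sum.inl_ne_inr h'⟩
    obtain ⟨S, hSsub, hSor⟩ := key
    refine ⟨⇑e ⁻¹' S, ?_, ?_⟩
    · intro v hv
      obtain ⟨h1', h2', h3'⟩ := hSsub (e v) hv
      simp only [Set.mem_compl_iff, Set.mem_insert_iff, Set.mem_singleton_iff]
      rintro (rfl | rfl | rfl)
      · exact h1' rfl
      · exact h2' rfl
      · exact h3' rfl
    · rcases hSor with h' | h'
      · exact Or.inl (collapsible_of_iso e h')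
      · exact Or.inr (nontrivialCocollapsible_of_iso e h')
/-- Let `G` be a `4`-Ore graph not isomorphic to `K4`. Then for
every triangle `T` of `G`, the set `V(G) ∖ V(T)` contains either a collapsible
subset of `G` or a nontrivial cocollapsible subset of `G`. -/
theorem statement_15 {V : Type} [Fintype V] (G : SimpleGraph V)
    (hOre : IsFourOre G) (hK4 : ¬ Nonempty (G ≃g completeGraph (Fin 4)))
    (t1 t2 t3 : V) (h12 : G.Adj t1 t2) (h13 : G.Adj t1 t3) (h23 : G.Adj t2 t3) :
    ∃ R : Set V, R ⊆ (({t1, t2, t3} : Set V)ᶜ : Set V) ∧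
      (Collapsible G R ∨ NontrivialCocollapsible G R) := by
  exact fourOre_main hOre (Finite.of_fintype V) hK4 t1 t2 t3 h12 h13 h23
end

section
/- Let R be a tight collapsible subset of a 4-critical graph G and let S be the boundary of R. If |S| ≥ 3, then every vertex of S has degree at least four in G. If |S| = 2, then at least one vertex of S has degree at least four in G. -/
open SimpleGraph

private lemma fin3_exists (a b : Fin 3) : ∃ c : Fin 3, c ≠ a ∧ c ≠ b := by
  fin_cases a <;> fin_cases b <;> decide

private lemma withEdge_adj' {W : Type} (H : SimpleGraph W) (a b x y : W) :
    (withEdge H a b).Adj x y ↔ H.Adj x y ∨ (x ≠ y ∧ ((x = a ∧ y = b) ∨ (x = b ∧ y = a))) := by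
  unfold withEdge
  simp only [SimpleGraph.sup_adj, SimpleGraph.fromEdgeSet_adj, Set.mem_singleton_iff,
    Sym2.eq_iff]
  tauto

/-- In a `4`-critical graph no vertex has degree one or two. -/
private lemma crit_no_lowdeg {W : Type} [Finite W] (H : SimpleGraph W)
    (h4 : IsKCritical H 4) (v : W)
    (hle : (H.neighborSet v).ncard ≤ 2) (hne : (H.neighborSet v).Nonempty) : False := by
  classical
  obtain ⟨x, hx⟩ := hne
  set H' : SimpleGraph W :=
    { Adj := fun a b => H.Adj a b ∧ a ≠ v ∧ b ≠ v
      symm := ⟨by rintro a b ⟨h1, h2, h3⟩; exact ⟨h1.symm, h3, h2⟩⟩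
      loopless := ⟨by rintro a ⟨h1, _, _⟩; exact H.loopless.irrefl a h1⟩ } with hH'
  have hle' : H' ≤ H := by intro a b h; exact h.1
  have hneq : H' ≠ H := by
    intro heq
    have hx' : H'.Adj v x := heq.symm ▸ hx
    exact hx'.2.1 rfl
  have hcolorable : H'.Colorable 3 := h4.2 H' hle' hneq
  obtain ⟨C⟩ := hcolorable
  have himg : ((⇑C) '' (H.neighborSet v)).ncard ≤ 2 :=
    le_trans (Set.ncard_image_le (Set.toFinite _)) hle
  have hex : ∃ c : Fin 3, c ∉ (⇑C) '' (H.neighborSet v) := by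
    by_contra hc
    push_neg at hc
    have hsub : (Set.univ : Set (Fin 3)) ⊆ (⇑C) '' (H.neighborSet v) := fun c _ => hc c
    have h3 : (3 : ℕ) ≤ ((⇑C) '' (H.neighborSet v)).ncard := by
      have := Set.ncard_le_ncard hsub (Set.toFinite _)
      simpa [Set.ncard_univ] using this
    omega
  obtain ⟨c, hc⟩ := hex
  have hcol : H.Colorable 3 := by
    refine ⟨SimpleGraph.Coloring.mk (fun w => if w = v then c else C w) ?_⟩
    intro a b hab
    by_cases ha : a = v <;> by_cases hb : b = v
    · rw [ha, hb] at hab; exact absurd hab (H.loopless.irrefl v)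
    · simp only [if_pos ha, if_neg hb]
      intro hcb
      exact hc ⟨b, ha ▸ hab, hcb.symm⟩
    · simp only [if_neg ha, if_pos hb]
      intro hca
      exact hc ⟨a, (hb ▸ hab).symm, hca⟩
    · simp only [if_neg ha, if_neg hb]
      exact C.valid ⟨hab, ha, hb⟩
  exact h4.1 hcol

private lemma induce_nbr_ncard {V : Type} (G : SimpleGraph V) (R : Set V) (v : V) (hv : v ∈ R) :
    ((G.induce R).neighborSet ⟨v, hv⟩).ncard = {b | b ∈ R ∧ G.Adj v b}.ncard := by
  rw [← Set.ncard_image_of_injective ((G.induce R).neighborSet ⟨v, hv⟩) Subtype.val_injective]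
  congr 1
  ext b
  simp only [Set.mem_image, SimpleGraph.mem_neighborSet, SimpleGraph.comap_adj,
    Function.Embedding.coe_subtype, Set.mem_setOf_eq]
  constructor
  · rintro ⟨⟨b', hb'⟩, hadj, rfl⟩; exact ⟨hb', hadj⟩
  · rintro ⟨hb, hadj⟩; exact ⟨⟨b, hb⟩, hadj, rfl⟩


/-- Let `R` be a tight collapsible subset of a `4`-critical graph
`G` and let `S` be the boundary of `R`. If `|S| ≥ 3` then every vertex of `S`
has degree at least four in `G`, and if `|S| = 2` then at least one vertex of
`S` has degree at least four in `G`. -/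
theorem statement_16 {V : Type} [Fintype V] (G : SimpleGraph V)
    (hG : IsKCritical G 4) (R : Set V) (hR : TightCollapsible G R) :
    (3 ≤ (boundary G R).ncard → ∀ v ∈ boundary G R, 4 ≤ deg G v) ∧
    ((boundary G R).ncard = 2 → ∃ v ∈ boundary G R, 4 ≤ deg G v) := by
    classical
  obtain ⟨hcol, htight⟩ := hR
  -- inside-neighbour count of a boundary vertex is strictly below its degree
  have hinside : ∀ v, v ∈ boundary G R → ({b | b ∈ R ∧ G.Adj v b}).ncard < deg G v := by
    intro v hv
    obtain ⟨x, hxR, hadj⟩ := hv.2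
    have hsub : {b | b ∈ R ∧ G.Adj v b} ⊂ G.neighborSet v := by
      rw [Set.ssubset_def]
      constructor
      · intro b hb; exact hb.2
      · intro hcon
        exact hxR ((hcon hadj).1)
    have h := Set.ncard_lt_ncard hsub (Set.toFinite _)
    rw [deg, Nat.card_coe_set_eq]
    exact h
  -- if two distinct boundary vertices exist, every boundary vertex has ≥ 2 neighbours in R
  have hin2 : ∀ a, ∀ ha : a ∈ boundary G R, ∀ b, ∀ hb : b ∈ boundary G R, a ≠ b →
      2 ≤ {c | c ∈ R ∧ G.Adj a c}.ncard := by
    intro a ha b hb hab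
    by_contra hlt
    push_neg at hlt
    have h4 := htight a ha b hb hab
    refine crit_no_lowdeg _ h4 ⟨a, ha.1⟩ ?_ ?_
    · have hsub : (withEdge (G.induce R) ⟨a, ha.1⟩ ⟨b, hb.1⟩).neighborSet ⟨a, ha.1⟩ ⊆
          insert (⟨b, hb.1⟩ : R) ((G.induce R).neighborSet ⟨a, ha.1⟩) := by
        intro z hz
        rw [SimpleGraph.mem_neighborSet, withEdge_adj'] at hz
        rcases hz with h | ⟨hne', (⟨h1, h2⟩ | ⟨h1, h2⟩)⟩
        · exact Set.mem_insert_of_mem _ h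
        · exact h2 ▸ Set.mem_insert _ _
        · exact absurd (congrArg Subtype.val h1) hab
      calc ((withEdge (G.induce R) ⟨a, ha.1⟩ ⟨b, hb.1⟩).neighborSet ⟨a, ha.1⟩).ncard
          ≤ (insert (⟨b, hb.1⟩ : R) ((G.induce R).neighborSet ⟨a, ha.1⟩)).ncard :=
            Set.ncard_le_ncard hsub (Set.toFinite _)
        _ ≤ ((G.induce R).neighborSet ⟨a, ha.1⟩).ncard + 1 := Set.ncard_insert_le _ _
        _ ≤ 2 := by rw [induce_nbr_ncard G R a ha.1]; omega
    · refine ⟨⟨b, hb.1⟩, ?_⟩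
      rw [SimpleGraph.mem_neighborSet, withEdge_adj']
      exact Or.inr ⟨fun h => hab (congrArg Subtype.val h), Or.inl ⟨rfl, rfl⟩⟩
  constructor
  · -- |S| ≥ 3
    intro hS3 v hv
    by_contra hdeg
    push_neg at hdeg
    have hNv : {b | b ∈ R ∧ G.Adj v b}.ncard ≤ 2 := by
      have := hinside v hv; omega
    have h2 : 1 < ((boundary G R) \ {v}).ncard := by
      have := Set.ncard_diff_singleton_add_one hv (Set.toFinite _)
      omega
    obtain ⟨u, w, hu, hw, huw⟩ := (Set.one_lt_ncard_iff (Set.toFinite _)).mp h2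
    have huS : u ∈ boundary G R := hu.1
    have hwS : w ∈ boundary G R := hw.1
    have hvu : v ≠ u := fun h => hu.2 h.symm
    have hvw : v ≠ w := fun h => hw.2 h.symm
    by_cases hne : {b | b ∈ R ∧ G.Adj v b}.Nonempty
    · have h4 := htight u huS w hwS huw
      have hnbr : (withEdge (G.induce R) ⟨u, huS.1⟩ ⟨w, hwS.1⟩).neighborSet ⟨v, hv.1⟩ =
          (G.induce R).neighborSet ⟨v, hv.1⟩ := by
        ext z
        rw [SimpleGraph.mem_neighborSet, SimpleGraph.mem_neighborSet, withEdge_adj']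
        constructor
        · rintro (h | ⟨hne', (⟨h1, h2⟩ | ⟨h1, h2⟩)⟩)
          · exact h
          · exact absurd (congrArg Subtype.val h1) hvu
          · exact absurd (congrArg Subtype.val h1) hvw
        · exact Or.inl
      refine crit_no_lowdeg _ h4 ⟨v, hv.1⟩ ?_ ?_
      · rw [hnbr, induce_nbr_ncard G R v hv.1]; exact hNv
      · obtain ⟨b, hbR, hbadj⟩ := hne
        refine ⟨⟨b, hbR⟩, ?_⟩
        rw [hnbr]
        exact hbadj
    · rw [Set.not_nonempty_iff_eq_empty] at hne
      set G0 : SimpleGraph V :=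
        { Adj := fun a b => G.Adj a b ∧ a ∈ R ∧ b ∈ R
          symm := ⟨by rintro a b ⟨h1, h2, h3⟩; exact ⟨h1.symm, h3, h2⟩⟩
          loopless := ⟨by rintro a ⟨h1, _, _⟩; exact G.loopless.irrefl a h1⟩ } with hG0
      have hle0 : G0 ≤ G := by intro a b h; exact h.1
      have hneq0 : G0 ≠ G := by
        intro heq
        obtain ⟨x, hxR, hadj⟩ := hv.2
        have hx' : G0.Adj v x := heq.symm ▸ hadj
        exact hxR hx'.2.2
      have hcolorable : G.Colorable 3 → False := fun h => hG.1 h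
      obtain ⟨C⟩ : G0.Colorable 3 := hG.2 G0 hle0 hneq0
      have hproper : ∀ a ∈ R, ∀ b ∈ R, G.Adj a b → (⇑C) a ≠ (⇑C) b :=
        fun a ha b hb hab => C.valid ⟨hab, ha, hb⟩
      obtain ⟨c, hc, -⟩ := fin3_exists ((⇑C) u) ((⇑C) u)
      have hproper' : ∀ a ∈ R, ∀ b ∈ R, G.Adj a b →
          (fun w => if w = v then c else (⇑C) w) a ≠ (fun w => if w = v then c else (⇑C) w) b := by
        intro a ha b hb hab
        by_cases h1 : a = v
        · exact absurd (show b ∈ {b | b ∈ R ∧ G.Adj v b} from ⟨hb, h1 ▸ hab⟩)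
            (by rw [hne]; exact Set.notMem_empty b)
        · by_cases h2 : b = v
          · exact absurd (show a ∈ {b | b ∈ R ∧ G.Adj v b} from ⟨ha, (h2 ▸ hab).symm⟩)
              (by rw [hne]; exact Set.notMem_empty a)
          · simp only [if_neg h1, if_neg h2]
            exact hproper a ha b hb hab
      have hsame := hcol.2.2 _ hproper' v hv u huS
      simp only [if_pos rfl, if_neg (fun h => hvu h.symm : ¬ u = v)] at hsame
      exact hc hsame
  · -- |S| = 2
    intro hS2
    obtain ⟨u, v, huv, hSuv⟩ := Set.ncard_eq_two.mp hS2
    have huS : u ∈ boundary G R := by rw [hSuv]; exact Set.mem_insert _ _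
    have hvS : v ∈ boundary G R := by rw [hSuv]; exact Set.mem_insert_of_mem _ rfl
    by_contra hcon
    push_neg at hcon
    have hdu : deg G u ≤ 3 := by have := hcon u huS; omega
    have hdv : deg G v ≤ 3 := by have := hcon v hvS; omega
    have h2u := hin2 u huS v hvS huv
    have h2v := hin2 v hvS u huS huv.symm
    -- degree decomposition
    have hcard : ∀ a, deg G a = {c | c ∈ R ∧ G.Adj a c}.ncard + {c | c ∉ R ∧ G.Adj a c}.ncard := by
      intro a
      have hsplit : (G.neighborSet a : Set V) =
          {c | c ∈ R ∧ G.Adj a c} ∪ {c | c ∉ R ∧ G.Adj a c} := by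
        ext z
        by_cases hz : z ∈ R <;>
          simp [SimpleGraph.mem_neighborSet, hz]
      rw [deg, Nat.card_coe_set_eq, hsplit,
        Set.ncard_union_eq (Set.disjoint_left.mpr fun z h1 h2 => h2.1 h1.1)
          (Set.toFinite _) (Set.toFinite _)]
    have hXu1 : {c | c ∉ R ∧ G.Adj u c}.ncard = 1 := by
      have hc := hcard u
      have hpos : 0 < {c | c ∉ R ∧ G.Adj u c}.ncard := by
        rw [Set.ncard_pos (Set.toFinite _)]
        obtain ⟨x, hx1, hx2⟩ := huS.2
        exact ⟨x, hx1, hx2⟩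
      omega
    have hXv1 : {c | c ∉ R ∧ G.Adj v c}.ncard = 1 := by
      have hc := hcard v
      have hpos : 0 < {c | c ∉ R ∧ G.Adj v c}.ncard := by
        rw [Set.ncard_pos (Set.toFinite _)]
        obtain ⟨x, hx1, hx2⟩ := hvS.2
        exact ⟨x, hx1, hx2⟩
      omega
    obtain ⟨x, hXu⟩ := Set.ncard_eq_one.mp hXu1
    obtain ⟨y, hXv⟩ := Set.ncard_eq_one.mp hXv1
    have hxmem : x ∈ {c | c ∉ R ∧ G.Adj u c} := hXu ▸ rfl
    have hymem : y ∈ {c | c ∉ R ∧ G.Adj v c} := hXv ▸ rfl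
    have hxR : x ∉ R := hxmem.1
    have hadjux : G.Adj u x := hxmem.2
    -- classification of crossing edges
    have hcross : ∀ a b, a ∈ R → b ∉ R → G.Adj a b → (a = u ∧ b = x) ∨ (a = v ∧ b = y) := by
      intro a b haR hbR hab
      have haS : a ∈ boundary G R := ⟨haR, b, hbR, hab⟩
      rw [hSuv] at haS
      rcases haS with rfl | rfl
      · left
        refine ⟨rfl, ?_⟩
        have : b ∈ {c | c ∉ R ∧ G.Adj a c} := ⟨hbR, hab⟩
        rw [hXu] at this
        exact this
      · right
        refine ⟨rfl, ?_⟩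
        have : b ∈ {c | c ∉ R ∧ G.Adj a c} := ⟨hbR, hab⟩
        rw [hXv] at this
        exact this
    -- delete the edge ux and recolour
    have hle1 : G.deleteEdges {s(u, x)} ≤ G := SimpleGraph.deleteEdges_le _
    have hneq1 : G.deleteEdges {s(u, x)} ≠ G := by
      intro heq
      have h' : (G.deleteEdges {s(u, x)}).Adj u x := heq.symm ▸ hadjux
      rw [SimpleGraph.deleteEdges_adj] at h'
      exact h'.2 rfl
    obtain ⟨C⟩ : (G.deleteEdges {s(u, x)}).Colorable 3 := hG.2 _ hle1 hneq1
    have hproper : ∀ a ∈ R, ∀ b ∈ R, G.Adj a b → (⇑C) a ≠ (⇑C) b := by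
      intro a ha b hb hab
      apply C.valid
      rw [SimpleGraph.deleteEdges_adj]
      refine ⟨hab, ?_⟩
      simp only [Set.mem_singleton_iff, Sym2.eq_iff]
      rintro (⟨rfl, rfl⟩ | ⟨rfl, rfl⟩)
      · exact hxR hb
      · exact hxR ha
    have hCuv : (⇑C) u = (⇑C) v := hcol.2.2 (⇑C) hproper u huS v hvS
    obtain ⟨c, hcx, hcy⟩ := fin3_exists ((⇑C) x) ((⇑C) y)
    have hvalid : ∀ a b, G.Adj a b →
        (fun w => if w ∈ R then Equiv.swap ((⇑C) u) c ((⇑C) w) else (⇑C) w) a ≠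
        (fun w => if w ∈ R then Equiv.swap ((⇑C) u) c ((⇑C) w) else (⇑C) w) b := by
      intro a b hab
      by_cases ha : a ∈ R <;> by_cases hb : b ∈ R
      · simp only [if_pos ha, if_pos hb]
        exact (Equiv.swap ((⇑C) u) c).injective.ne (hproper a ha b hb hab)
      · rcases hcross a b ha hb hab with ⟨rfl, rfl⟩ | ⟨rfl, rfl⟩
        · simp only [if_pos ha, if_neg hb, Equiv.swap_apply_left]
          exact hcx
        · simp only [if_pos ha, if_neg hb, ← hCuv, Equiv.swap_apply_left]
          exact hcy
      · rcases hcross b a hb ha hab.symm with ⟨rfl, rfl⟩ | ⟨rfl, rfl⟩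
        · simp only [if_pos hb, if_neg ha, Equiv.swap_apply_left]
          exact hcx.symm
        · simp only [if_pos hb, if_neg ha, ← hCuv, Equiv.swap_apply_left]
          exact hcy.symm
      · simp only [if_neg ha, if_neg hb]
        apply C.valid
        rw [SimpleGraph.deleteEdges_adj]
        refine ⟨hab, ?_⟩
        simp only [Set.mem_singleton_iff, Sym2.eq_iff]
        rintro (⟨rfl, -⟩ | ⟨-, rfl⟩)
        · exact ha huS.1
        · exact hb huS.1
    exact hG.1 ⟨SimpleGraph.Coloring.mk _ (fun {a b} h => hvalid a b h)⟩
end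

section
/- If H is a tree (a finite connected acyclic graph) with maximum degree at most three, then α(H) ≤ (2/3)·|V(H)| + 1/3, i.e., 3·α(H) ≤ 2·|V(H)| + 1. -/
open SimpleGraph

/-- If `H` is a tree with maximum degree at most three, then
`3 α(H) ≤ 2 |V(H)| + 1`. -/
theorem statement_17 {V : Type} [Fintype V] (H : SimpleGraph V)
    (hT : H.IsTree) (hdeg : ∀ v, deg H v ≤ 3) :
    3 * _root_.indepNum H ≤ 2 * Fintype.card V + 1 := by
  classical
  set Sset : Set ℕ :=
    {n | ∃ s : Set V, (∀ u ∈ s, ∀ v ∈ s, ¬ H.Adj u v) ∧ s.ncard = n} with hSset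
  have hbound : ∀ n ∈ Sset, 3 * n ≤ 2 * Fintype.card V + 1 := by
    rintro n ⟨s, hs, rfl⟩
    have hsfin : s.Finite := Set.toFinite s
    set S : Finset V := hsfin.toFinset with hSdef
    have hcard : s.ncard = S.card := Set.ncard_eq_toFinset_card s hsfin
    have hsub : H.edgeFinset ⊆ Sᶜ.biUnion (fun v => H.incidenceFinset v) := by
      intro e he
      induction e with
      | h u v =>
        rw [SimpleGraph.mem_edgeFinset] at he
        have hadj : H.Adj u v := he
        have : u ∉ s ∨ v ∉ s := by
          by_contra hc
          push_neg at hc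
          exact hs u hc.1 v hc.2 hadj
        rcases this with hu | hv
        · refine Finset.mem_biUnion.2 ⟨u, ?_, ?_⟩
          · simp only [Finset.mem_compl, hSdef, Set.Finite.mem_toFinset]; exact hu
          · rw [SimpleGraph.mem_incidenceFinset]
            exact ⟨he, Sym2.mem_mk_left u v⟩
        · refine Finset.mem_biUnion.2 ⟨v, ?_, ?_⟩
          · simp only [Finset.mem_compl, hSdef, Set.Finite.mem_toFinset]; exact hv
          · rw [SimpleGraph.mem_incidenceFinset]
            exact ⟨he, Sym2.mem_mk_right u v⟩
    have hdeg' : ∀ v : V, H.degree v ≤ 3 := by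
      intro v
      have := hdeg v
      rwa [deg, Nat.card_eq_fintype_card, SimpleGraph.card_neighborSet_eq_degree] at this
    have h1 : H.edgeFinset.card ≤ 3 * Sᶜ.card := by
      calc H.edgeFinset.card ≤ (Sᶜ.biUnion (fun v => H.incidenceFinset v)).card :=
            Finset.card_le_card hsub
        _ ≤ ∑ v ∈ Sᶜ, (H.incidenceFinset v).card := Finset.card_biUnion_le
        _ = ∑ v ∈ Sᶜ, H.degree v := by
            refine Finset.sum_congr rfl fun v _ => ?_
            exact H.card_incidenceFinset_eq_degree v
        _ ≤ ∑ _v ∈ Sᶜ, 3 := Finset.sum_le_sum fun v _ => hdeg' v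
        _ = 3 * Sᶜ.card := by rw [Finset.sum_const, smul_eq_mul, mul_comm]
    have h2 : H.edgeFinset.card + 1 = Fintype.card V := hT.card_edgeFinset
    have h3 : Sᶜ.card = Fintype.card V - S.card := by
      rw [Finset.card_compl]
    have h4 : S.card ≤ Fintype.card V := Finset.card_le_univ S
    rw [hcard]
    omega
  have hne : Sset.Nonempty := ⟨0, ∅, by simp, by simp⟩
  have hbdd : BddAbove Sset := by
    refine ⟨Fintype.card V, fun n hn => ?_⟩
    obtain ⟨s, _, rfl⟩ := hn
    exact Set.ncard_le_ncard (Set.subset_univ s) (Set.toFinite _) |>.trans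
      (by simp [Set.ncard_univ, Nat.card_eq_fintype_card])
  have hmem : sSup Sset ∈ Sset := Nat.sSup_mem hne hbdd
  exact hbound _ hmem
end
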